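/- arXiv:math/0510300 — 6 statements merged into one kernel-verified Lean document; each statement's English description precedes it below -/
import Mathlib

section
/- (Reduction Theorem, upper block.) Let c₁₄₇, c₂₃₇, c₅₆₇ be real numbers and set K = c₁₄₇·e₁e₄ + c₂₃₇·e₂e₃ + c₅₆₇·e₅e₆ (an 8×8 real matrix). Suppose ψ = (a,b,c,d,0,0,0,0) ∈ ℝ⁸ is nonzero and satisfies K·ψ = 0. Then either (c₅₆₇ = 0 and c₁₄₇ = −c₂₃₇), or there exists ε ∈ {1,−1} such that c₁₄₇ = −c₂₃₇ + ε·c₅₆₇ and (c,d) = (−ε·a, ε·b). -/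
open Matrix

noncomputable section

/-- `E8 i j` is the 8×8 skew-symmetric matrix sending the `i`-th basis
vector to the `j`-th, the `j`-th to minus the `i`-th, and all others to 0. -/
def E8 (i j : Fin 8) : Matrix (Fin 8) (Fin 8) ℝ :=
  Matrix.single j i 1 - Matrix.single i j 1

/-- The matrices `e₁,…,e₇` of the 7-dimensional spin representation on ℝ⁸
(indices shifted to be 0-based). -/
def g : Fin 7 → Matrix (Fin 8) (Fin 8) ℝ :=
  ![E8 0 7 + E8 1 6 - E8 2 5 - E8 3 4,
    -E8 0 6 + E8 1 7 + E8 2 4 - E8 3 5,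
    -E8 0 5 + E8 1 4 - E8 2 7 + E8 3 6,
    -E8 0 4 - E8 1 5 - E8 2 6 - E8 3 7,
    -E8 0 2 - E8 1 3 + E8 4 6 + E8 5 7,
    E8 0 3 - E8 1 2 - E8 4 7 + E8 5 6,
    E8 0 1 - E8 2 3 - E8 4 5 + E8 6 7]

/-- 7×7 version of `E_{ij}`. -/
def E7 (i j : Fin 7) : Matrix (Fin 7) (Fin 7) ℝ :=
  Matrix.single j i 1 - Matrix.single i j 1

/-- The spin lift `σ(A) = (1/2) Σ_{p<q} a_{pq} e_p e_q` of a skew-symmetric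
7×7 matrix `A = Σ_{p<q} a_{pq} E_{pq}` (so that `a_{pq} = A q p` for `p < q`). -/
def spinLift (A : Matrix (Fin 7) (Fin 7) ℝ) : Matrix (Fin 8) (Fin 8) ℝ :=
  (1/2 : ℝ) • ∑ p : Fin 7, ∑ q : Fin 7, if p < q then A q p • (g p * g q) else 0

/-- Clifford action of the interior product `e_i ⌟ e_{abc}` (for `a<b<c`). -/
def contr (i a b c : Fin 7) : Matrix (Fin 8) (Fin 8) ℝ :=
  (if i = a then g b * g c else 0) - (if i = b then g a * g c else 0) +
    (if i = c then g a * g b else 0)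

/-- The ordered index triples (0-based) of the eleven basis 3-forms spanning `Λ³₁₁`:
`e₁₂₅, e₁₃₆, e₂₄₆, e₃₄₅, e₁₂₆, e₃₄₆, e₁₃₅, e₂₄₅, e₁₄₇, e₅₆₇, e₂₃₇`. -/
def tri : Fin 11 → Fin 7 × Fin 7 × Fin 7 :=
  ![(0,1,4),(0,2,5),(1,3,5),(2,3,4),(0,1,5),(2,3,5),(0,2,4),(1,3,4),(0,3,6),(4,5,6),(1,2,6)]

/-- For `T = Σ_k c_k e_{tri k} ∈ Λ³₁₁`, the Clifford action `Cl(e_i ⌟ T)`. -/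
def clContr (c : Fin 11 → ℝ) (i : Fin 7) : Matrix (Fin 8) (Fin 8) ℝ :=
  ∑ k : Fin 11, c k • contr i (tri k).1 (tri k).2.1 (tri k).2.2

/-- `ψ` is `∇ᵀ`-parallel for connection matrices `A` and torsion `T ∈ Λ³₁₁`
with coefficient vector `c`. -/
def IsParallel (A : Fin 7 → Matrix (Fin 7) (Fin 7) ℝ) (c : Fin 11 → ℝ)
    (ψ : Fin 8 → ℝ) : Prop :=
  ∀ i : Fin 7, (spinLift (A i)).mulVec ψ + (clContr c i).mulVec ψ = 0

/-- Reduction Theorem, upper block. -/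
theorem stmt1 (c147 c237 c567 a b c d : ℝ)
    (ψ : Fin 8 → ℝ) (hψ : ψ = ![a, b, c, d, 0, 0, 0, 0]) (hne : ψ ≠ 0)
    (h : (c147 • (g 0 * g 3) + c237 • (g 1 * g 2) + c567 • (g 4 * g 5)).mulVec ψ = 0) :
    (c567 = 0 ∧ c147 = -c237) ∨
    ∃ eps : ℝ, (eps = 1 ∨ eps = -1) ∧ c147 = -c237 + eps * c567 ∧
      c = -eps * a ∧ d = eps * b := by
  have e0 : g 0 = E8 0 7 + E8 1 6 - E8 2 5 - E8 3 4 := rfl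
  have e1 : g 1 = -E8 0 6 + E8 1 7 + E8 2 4 - E8 3 5 := rfl
  have e2 : g 2 = -E8 0 5 + E8 1 4 - E8 2 7 + E8 3 6 := rfl
  have e3 : g 3 = -E8 0 4 - E8 1 5 - E8 2 6 - E8 3 7 := rfl
  have e4 : g 4 = -E8 0 2 - E8 1 3 + E8 4 6 + E8 5 7 := rfl
  have e5 : g 5 = E8 0 3 - E8 1 2 - E8 4 7 + E8 5 6 := rfl
  subst hψ
  rw [e0, e1, e2, e3, e4, e5] at h
  have h0 := congrFun h 0
  have h1 := congrFun h 1
  have h2 := congrFun h 2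
  have h3 := congrFun h 3
  simp [Matrix.mulVec, dotProduct, Fin.sum_univ_succ, E8, Matrix.mul_apply,
    Matrix.single, Matrix.add_apply, Matrix.sub_apply, Matrix.smul_apply,
    Matrix.neg_apply, Matrix.of_apply] at h0 h1 h2 h3
  norm_num [Fin.ext_iff, Fin.val_succ] at h0 h1 h2 h3
  norm_num [show ((3 : Fin 8) : ℕ) = 3 from rfl] at h0 h2
  clear h e0 e1 e2 e3 e4 e5
  -- h0 : -(c567 * b) + (c147 + c237) * d = 0
  -- h1 : c567 * a + (c147 + c237) * c = 0
  -- h2 : (-c147 + -c237) * b + c567 * d = 0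
  -- h3 : (-c147 + -c237) * a + -(c567 * c) = 0
  have hz : ¬ (a = 0 ∧ b = 0 ∧ c = 0 ∧ d = 0) := by
    rintro ⟨ha, hb, hc, hd⟩
    exact hne (by subst ha hb hc hd; ext i; fin_cases i <;> rfl)
  by_cases ht : c567 = 0
  · subst ht
    by_cases hs : c147 + c237 = 0
    · exact Or.inl ⟨rfl, by linarith⟩
    · exfalso
      apply hz
      constructor
      · have : (c147 + c237) * a = 0 := by linarith
        exact (mul_eq_zero.mp this).resolve_left hs
      constructor
      · have : (c147 + c237) * b = 0 := by linarith
        exact (mul_eq_zero.mp this).resolve_left hs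
      constructor
      · have : (c147 + c237) * c = 0 := by linarith
        exact (mul_eq_zero.mp this).resolve_left hs
      · have : (c147 + c237) * d = 0 := by linarith
        exact (mul_eq_zero.mp this).resolve_left hs
  · right
    have ka : (c567 ^ 2 - (c147 + c237) ^ 2) * a = 0 := by
      linear_combination c567 * h1 + (c147 + c237) * h3
    have kb : (c567 ^ 2 - (c147 + c237) ^ 2) * b = 0 := by
      linear_combination (c147 + c237) * h2 - c567 * h0
    have kc : (c567 ^ 2 - (c147 + c237) ^ 2) * c = 0 := by
      linear_combination -(c147 + c237) * h1 - c567 * h3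
    have kd : (c567 ^ 2 - (c147 + c237) ^ 2) * d = 0 := by
      linear_combination c567 * h2 - (c147 + c237) * h0
    have hsq : c567 ^ 2 - (c147 + c237) ^ 2 = 0 := by
      by_contra hk
      exact hz ⟨(mul_eq_zero.mp ka).resolve_left hk, (mul_eq_zero.mp kb).resolve_left hk,
        (mul_eq_zero.mp kc).resolve_left hk, (mul_eq_zero.mp kd).resolve_left hk⟩
    have hfac : (c147 + c237 - c567) * (c147 + c237 + c567) = 0 := by linear_combination -hsq
    rcases mul_eq_zero.mp hfac with hst | hst
    · refine ⟨1, Or.inl rfl, by linarith, ?_, ?_⟩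
      · have : c567 * (a + c) = 0 := by linear_combination h1 - c * hst
        have := (mul_eq_zero.mp this).resolve_left ht
        linarith
      · have : c567 * (d - b) = 0 := by linear_combination h0 - d * hst
        have := (mul_eq_zero.mp this).resolve_left ht
        linarith
    · refine ⟨-1, Or.inr rfl, by linarith, ?_, ?_⟩
      · have : c567 * (a - c) = 0 := by linear_combination h1 - c * hst
        have := (mul_eq_zero.mp this).resolve_left ht
        linarith
      · have : c567 * (d + b) = 0 := by linear_combination -h0 + d * hst
        have := (mul_eq_zero.mp this).resolve_left ht
        linarith
end
end

section
/- (Reduction Theorem, lower block.) Let c₁₄₇, c₂₃₇, c₅₆₇ be real numbers and set K = c₁₄₇·e₁e₄ + c₂₃₇·e₂e₃ + c₅₆₇·e₅e₆ (an 8×8 real matrix). Suppose ψ = (0,0,0,0,e,f,g,h) ∈ ℝ⁸ is nonzero and satisfies K·ψ = 0. Then either (c₅₆₇ = 0 and c₁₄₇ = c₂₃₇), or there exists ε ∈ {1,−1} such that c₁₄₇ = c₂₃₇ + ε·c₅₆₇ and (g,h) = (ε·e, −ε·f). -/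
open Matrix

noncomputable section

set_option maxHeartbeats 1000000 in
/-- Reduction Theorem, lower block. -/
theorem stmt2 (c147 c237 c567 ee ff gg hh : ℝ)
    (ψ : Fin 8 → ℝ) (hψ : ψ = ![0, 0, 0, 0, ee, ff, gg, hh]) (hne : ψ ≠ 0)
    (h : (c147 • (g 0 * g 3) + c237 • (g 1 * g 2) + c567 • (g 4 * g 5)).mulVec ψ = 0) :
    (c567 = 0 ∧ c147 = c237) ∨
    ∃ eps : ℝ, (eps = 1 ∨ eps = -1) ∧ c147 = c237 + eps * c567 ∧
      gg = eps * ee ∧ hh = -eps * ff := by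
  have hg0 : g 0 = E8 0 7 + E8 1 6 - E8 2 5 - E8 3 4 := rfl
  have hg1 : g 1 = -E8 0 6 + E8 1 7 + E8 2 4 - E8 3 5 := rfl
  have hg2 : g 2 = -E8 0 5 + E8 1 4 - E8 2 7 + E8 3 6 := rfl
  have hg3 : g 3 = -E8 0 4 - E8 1 5 - E8 2 6 - E8 3 7 := rfl
  have hg4 : g 4 = -E8 0 2 - E8 1 3 + E8 4 6 + E8 5 7 := rfl
  have hg5 : g 5 = E8 0 3 - E8 1 2 - E8 4 7 + E8 5 6 := rfl
  subst hψ
  have hv4 : (![0, 0, 0, 0, ee, ff, gg, hh] : Fin 8 → ℝ) 4 = ee := rfl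
  have hv5 : (![0, 0, 0, 0, ee, ff, gg, hh] : Fin 8 → ℝ) 5 = ff := rfl
  have hv6 : (![0, 0, 0, 0, ee, ff, gg, hh] : Fin 8 → ℝ) 6 = gg := rfl
  have hv7 : (![0, 0, 0, 0, ee, ff, gg, hh] : Fin 8 → ℝ) 7 = hh := rfl
  rw [hg0, hg1, hg2, hg3, hg4, hg5] at h
  have h4 := congrFun h 4
  have h5 := congrFun h 5
  have h6 := congrFun h 6
  have h7 := congrFun h 7
  simp [E8, Matrix.mulVec, Matrix.mul_apply, dotProduct, Fin.sum_univ_eight,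
    Matrix.single, Matrix.add_apply, Matrix.sub_apply, Matrix.smul_apply,
    Matrix.of_apply, Pi.zero_apply, Matrix.neg_apply, smul_eq_mul,
    hv4, hv5, hv6, hv7] at h4 h5 h6 h7
  clear h hg0 hg1 hg2 hg3 hg4 hg5
  have E1 : (c147 - c237) * hh + c567 * ff = 0 := by
    first | linear_combination h4 | linear_combination -h4
  have E2 : (c147 - c237) * gg - c567 * ee = 0 := by
    first | linear_combination h5 | linear_combination -h5
  have E3 : (c147 - c237) * ff + c567 * hh = 0 := by
    first | linear_combination h6 | linear_combination -h6
  have E4 : (c147 - c237) * ee - c567 * gg = 0 := by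
    first | linear_combination h7 | linear_combination -h7
  clear h4 h5 h6 h7
  have hcomp : ee ≠ 0 ∨ ff ≠ 0 ∨ gg ≠ 0 ∨ hh ≠ 0 := by
    by_contra hall
    push_neg at hall
    obtain ⟨h1, h2, h3, h4'⟩ := hall
    subst h1; subst h2; subst h3; subst h4'
    exact hne (by funext i; fin_cases i <;> rfl)
  by_cases hc : c567 = 0
  · left
    refine ⟨hc, ?_⟩
    subst hc
    have key : c147 - c237 = 0 := by
      rcases hcomp with hx | hx | hx | hx
      · rcases mul_eq_zero.mp (show (c147 - c237) * ee = 0 by linear_combination E4) with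
          h' | h' <;> [exact h'; exact absurd h' hx]
      · rcases mul_eq_zero.mp (show (c147 - c237) * ff = 0 by linear_combination E3) with
          h' | h' <;> [exact h'; exact absurd h' hx]
      · rcases mul_eq_zero.mp (show (c147 - c237) * gg = 0 by linear_combination E2) with
          h' | h' <;> [exact h'; exact absurd h' hx]
      · rcases mul_eq_zero.mp (show (c147 - c237) * hh = 0 by linear_combination E1) with
          h' | h' <;> [exact h'; exact absurd h' hx]
    linarith
  · right
    have hsq : (c147 - c237) ^ 2 = c567 ^ 2 := by
      rcases hcomp with hx | hx | hx | hx
      · have : ((c147 - c237) ^ 2 - c567 ^ 2) * ee = 0 := by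
          linear_combination (c147 - c237) * E4 + c567 * E2
        rcases mul_eq_zero.mp this with h' | h' <;> [linarith; exact absurd h' hx]
      · have : ((c147 - c237) ^ 2 - c567 ^ 2) * ff = 0 := by
          linear_combination (c147 - c237) * E3 - c567 * E1
        rcases mul_eq_zero.mp this with h' | h' <;> [linarith; exact absurd h' hx]
      · have : ((c147 - c237) ^ 2 - c567 ^ 2) * gg = 0 := by
          linear_combination (c147 - c237) * E2 + c567 * E4
        rcases mul_eq_zero.mp this with h' | h' <;> [linarith; exact absurd h' hx]
      · have : ((c147 - c237) ^ 2 - c567 ^ 2) * hh = 0 := by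
          linear_combination (c147 - c237) * E1 - c567 * E3
        rcases mul_eq_zero.mp this with h' | h' <;> [linarith; exact absurd h' hx]
    have hde : c147 - c237 = c567 ∨ c147 - c237 = -c567 := by
      rcases mul_eq_zero.mp (show (c147 - c237 - c567) * (c147 - c237 + c567) = 0 by
        linear_combination hsq) with h' | h'
      · left; linarith
      · right; linarith
    rcases hde with h' | h'
    · refine ⟨1, Or.inl rfl, by linarith, ?_, ?_⟩
      · have hz : c567 * (gg - ee) = 0 := by linear_combination E2 - gg * h'
        rcases mul_eq_zero.mp hz with h'' | h'' <;> [exact absurd h'' hc; linarith]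
      · have hz : c567 * (hh + ff) = 0 := by linear_combination E1 - hh * h'
        rcases mul_eq_zero.mp hz with h'' | h'' <;> [exact absurd h'' hc; linarith]
    · refine ⟨-1, Or.inr rfl, by linarith, ?_, ?_⟩
      · have hz : c567 * (gg + ee) = 0 := by linear_combination -E2 + gg * h'
        rcases mul_eq_zero.mp hz with h'' | h'' <;> [exact absurd h'' hc; linarith]
      · have hz : c567 * (hh - ff) = 0 := by linear_combination -E1 + hh * h'
        rcases mul_eq_zero.mp hz with h'' | h'' <;> [exact absurd h'' hc; linarith]
end
end

section
/- For every real t > 0 and every (r,s) ∈ ℝ² with (r,s) ≠ (0,0), the spinor ψ_{r,s} = (0,0,0,0,r,s,−r,s) ∈ ℝ⁸ is ∇ᵀ-parallel for the torsion form T_{r,s}; that is, σ(A_i)·ψ_{r,s} + Cl(e_i ⌟ T_{r,s})·ψ_{r,s} = 0 for every i = 1,…,7, where A₁,…,A₇ are the connection matrices of example (2). -/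
open Matrix

noncomputable section

/-- Connection matrices of example (2). -/
def Aex2 (t : ℝ) : Fin 7 → Matrix (Fin 7) (Fin 7) ℝ :=
  ![(-t) • ((2:ℝ) • E7 0 6 + E7 2 4 - E7 1 5),
    (-t) • (E7 0 5 + (2:ℝ) • E7 1 6 + E7 3 4),
    (-t) • (E7 0 4 - E7 2 6),
    (-t) • (E7 1 4 - E7 3 6),
    (-t) • (E7 0 2 + E7 1 3 + (2:ℝ) • E7 4 6),
    (-t) • (E7 0 1 - E7 5 6),
    0]

/-- Coefficient vector of `η⁺ = e₁₂₅+e₁₃₆+e₂₄₆−e₃₄₅`. -/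
def etaP : Fin 11 → ℝ := ![1,1,1,-1,0,0,0,0,0,0,0]

/-- Coefficient vector of `η⁻ = e₁₂₆−e₁₃₅−e₂₄₅−e₃₄₆`. -/
def etaM : Fin 11 → ℝ := ![0,0,0,0,1,-1,-1,-1,0,0,0]

/-- Coefficient vector of the `k`-th basis 3-form of `Λ³₁₁`. -/
def bv (k : Fin 11) : Fin 11 → ℝ := Pi.single k 1

/-- Coefficient vector of the torsion form `T_{r,s}`. -/
def Trs (t r s : ℝ) : Fin 11 → ℝ :=
  (-(t/2)) • (((r^2 - s^2)/(2*(r^2 + s^2))) • (etaP - (6:ℝ) • bv 0)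
    + ((r - s)^2/(r^2 + s^2)) • (etaM + (3:ℝ) • bv 5))

set_option maxHeartbeats 4000000

@[simp] lemma vec7_at0 {α : Type*} (a0 a1 a2 a3 a4 a5 a6 : α) : ![a0, a1, a2, a3, a4, a5, a6] (0 : Fin 7) = a0 := rfl
@[simp] lemma vec7_at1 {α : Type*} (a0 a1 a2 a3 a4 a5 a6 : α) : ![a0, a1, a2, a3, a4, a5, a6] (1 : Fin 7) = a1 := rfl
@[simp] lemma vec7_at2 {α : Type*} (a0 a1 a2 a3 a4 a5 a6 : α) : ![a0, a1, a2, a3, a4, a5, a6] (2 : Fin 7) = a2 := rfl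
@[simp] lemma vec7_at3 {α : Type*} (a0 a1 a2 a3 a4 a5 a6 : α) : ![a0, a1, a2, a3, a4, a5, a6] (3 : Fin 7) = a3 := rfl
@[simp] lemma vec7_at4 {α : Type*} (a0 a1 a2 a3 a4 a5 a6 : α) : ![a0, a1, a2, a3, a4, a5, a6] (4 : Fin 7) = a4 := rfl
@[simp] lemma vec7_at5 {α : Type*} (a0 a1 a2 a3 a4 a5 a6 : α) : ![a0, a1, a2, a3, a4, a5, a6] (5 : Fin 7) = a5 := rfl
@[simp] lemma vec7_at6 {α : Type*} (a0 a1 a2 a3 a4 a5 a6 : α) : ![a0, a1, a2, a3, a4, a5, a6] (6 : Fin 7) = a6 := rfl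
@[simp] lemma vec8_at0 {α : Type*} (a0 a1 a2 a3 a4 a5 a6 a7 : α) : ![a0, a1, a2, a3, a4, a5, a6, a7] (0 : Fin 8) = a0 := rfl
@[simp] lemma vec8_at1 {α : Type*} (a0 a1 a2 a3 a4 a5 a6 a7 : α) : ![a0, a1, a2, a3, a4, a5, a6, a7] (1 : Fin 8) = a1 := rfl
@[simp] lemma vec8_at2 {α : Type*} (a0 a1 a2 a3 a4 a5 a6 a7 : α) : ![a0, a1, a2, a3, a4, a5, a6, a7] (2 : Fin 8) = a2 := rfl
@[simp] lemma vec8_at3 {α : Type*} (a0 a1 a2 a3 a4 a5 a6 a7 : α) : ![a0, a1, a2, a3, a4, a5, a6, a7] (3 : Fin 8) = a3 := rfl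
@[simp] lemma vec8_at4 {α : Type*} (a0 a1 a2 a3 a4 a5 a6 a7 : α) : ![a0, a1, a2, a3, a4, a5, a6, a7] (4 : Fin 8) = a4 := rfl
@[simp] lemma vec8_at5 {α : Type*} (a0 a1 a2 a3 a4 a5 a6 a7 : α) : ![a0, a1, a2, a3, a4, a5, a6, a7] (5 : Fin 8) = a5 := rfl
@[simp] lemma vec8_at6 {α : Type*} (a0 a1 a2 a3 a4 a5 a6 a7 : α) : ![a0, a1, a2, a3, a4, a5, a6, a7] (6 : Fin 8) = a6 := rfl
@[simp] lemma vec8_at7 {α : Type*} (a0 a1 a2 a3 a4 a5 a6 a7 : α) : ![a0, a1, a2, a3, a4, a5, a6, a7] (7 : Fin 8) = a7 := rfl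
@[simp] lemma vec11_at0 {α : Type*} (a0 a1 a2 a3 a4 a5 a6 a7 a8 a9 a10 : α) : ![a0, a1, a2, a3, a4, a5, a6, a7, a8, a9, a10] (0 : Fin 11) = a0 := rfl
@[simp] lemma vec11_at1 {α : Type*} (a0 a1 a2 a3 a4 a5 a6 a7 a8 a9 a10 : α) : ![a0, a1, a2, a3, a4, a5, a6, a7, a8, a9, a10] (1 : Fin 11) = a1 := rfl
@[simp] lemma vec11_at2 {α : Type*} (a0 a1 a2 a3 a4 a5 a6 a7 a8 a9 a10 : α) : ![a0, a1, a2, a3, a4, a5, a6, a7, a8, a9, a10] (2 : Fin 11) = a2 := rfl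
@[simp] lemma vec11_at3 {α : Type*} (a0 a1 a2 a3 a4 a5 a6 a7 a8 a9 a10 : α) : ![a0, a1, a2, a3, a4, a5, a6, a7, a8, a9, a10] (3 : Fin 11) = a3 := rfl
@[simp] lemma vec11_at4 {α : Type*} (a0 a1 a2 a3 a4 a5 a6 a7 a8 a9 a10 : α) : ![a0, a1, a2, a3, a4, a5, a6, a7, a8, a9, a10] (4 : Fin 11) = a4 := rfl
@[simp] lemma vec11_at5 {α : Type*} (a0 a1 a2 a3 a4 a5 a6 a7 a8 a9 a10 : α) : ![a0, a1, a2, a3, a4, a5, a6, a7, a8, a9, a10] (5 : Fin 11) = a5 := rfl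
@[simp] lemma vec11_at6 {α : Type*} (a0 a1 a2 a3 a4 a5 a6 a7 a8 a9 a10 : α) : ![a0, a1, a2, a3, a4, a5, a6, a7, a8, a9, a10] (6 : Fin 11) = a6 := rfl
@[simp] lemma vec11_at7 {α : Type*} (a0 a1 a2 a3 a4 a5 a6 a7 a8 a9 a10 : α) : ![a0, a1, a2, a3, a4, a5, a6, a7, a8, a9, a10] (7 : Fin 11) = a7 := rfl
@[simp] lemma vec11_at8 {α : Type*} (a0 a1 a2 a3 a4 a5 a6 a7 a8 a9 a10 : α) : ![a0, a1, a2, a3, a4, a5, a6, a7, a8, a9, a10] (8 : Fin 11) = a8 := rfl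
@[simp] lemma vec11_at9 {α : Type*} (a0 a1 a2 a3 a4 a5 a6 a7 a8 a9 a10 : α) : ![a0, a1, a2, a3, a4, a5, a6, a7, a8, a9, a10] (9 : Fin 11) = a9 := rfl
@[simp] lemma vec11_at10 {α : Type*} (a0 a1 a2 a3 a4 a5 a6 a7 a8 a9 a10 : α) : ![a0, a1, a2, a3, a4, a5, a6, a7, a8, a9, a10] (10 : Fin 11) = a10 := rfl

lemma g0_mulVec (v : Fin 8 → ℝ) : (g 0).mulVec v = ![-v 7, -v 6, v 5, v 4, -v 3, -v 2, v 1, v 0] := by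
  funext j; fin_cases j <;>
    simp [g, E8, Matrix.mulVec, dotProduct, Fin.sum_univ_succ, Matrix.single] <;> ring

lemma g1_mulVec (v : Fin 8 → ℝ) : (g 1).mulVec v = ![v 6, -v 7, -v 4, v 5, v 2, -v 3, -v 0, v 1] := by
  funext j; fin_cases j <;>
    simp [g, E8, Matrix.mulVec, dotProduct, Fin.sum_univ_succ, Matrix.single] <;> ring

lemma g2_mulVec (v : Fin 8 → ℝ) : (g 2).mulVec v = ![v 5, -v 4, v 7, -v 6, v 1, -v 0, v 3, -v 2] := by
  funext j; fin_cases j <;>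
    simp [g, E8, Matrix.mulVec, dotProduct, Fin.sum_univ_succ, Matrix.single] <;> ring

lemma g3_mulVec (v : Fin 8 → ℝ) : (g 3).mulVec v = ![v 4, v 5, v 6, v 7, -v 0, -v 1, -v 2, -v 3] := by
  funext j; fin_cases j <;>
    simp [g, E8, Matrix.mulVec, dotProduct, Fin.sum_univ_succ, Matrix.single] <;> ring

lemma g4_mulVec (v : Fin 8 → ℝ) : (g 4).mulVec v = ![v 2, v 3, -v 0, -v 1, -v 6, -v 7, v 4, v 5] := by
  funext j; fin_cases j <;>
    simp [g, E8, Matrix.mulVec, dotProduct, Fin.sum_univ_succ, Matrix.single] <;> ring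

lemma g5_mulVec (v : Fin 8 → ℝ) : (g 5).mulVec v = ![-v 3, v 2, -v 1, v 0, v 7, -v 6, v 5, -v 4] := by
  funext j; fin_cases j <;>
    simp [g, E8, Matrix.mulVec, dotProduct, Fin.sum_univ_succ, Matrix.single] <;> ring

lemma g6_mulVec (v : Fin 8 → ℝ) : (g 6).mulVec v = ![-v 1, v 0, v 3, -v 2, v 5, -v 4, -v 7, v 6] := by
  funext j; fin_cases j <;>
    simp [g, E8, Matrix.mulVec, dotProduct, Fin.sum_univ_succ, Matrix.single] <;> ring


lemma aux0 (t r s : ℝ) (h : r^2 + s^2 ≠ 0) :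
    (spinLift ((Aex2 t) 0)).mulVec ![0, 0, 0, 0, r, s, -r, s]
      + (clContr (Trs t r s) 0).mulVec ![0, 0, 0, 0, r, s, -r, s] = 0
    := by
  simp (config := { decide := true }) only [spinLift, Aex2, Fin.sum_univ_seven, Fin.isValue,
    vec7_at0, vec7_at1, vec7_at2, vec7_at3, vec7_at4, vec7_at5, vec7_at6,
    E7, Matrix.smul_apply, Matrix.add_apply, Matrix.sub_apply, Matrix.single,
    Matrix.of_apply, Matrix.zero_apply, smul_eq_mul, reduceIte]
  simp (config := { decide := true }) only [clContr, contr, Trs, tri, etaP, etaM, bv,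
    Fin.sum_univ_succ, Finset.sum_empty, Matrix.cons_val_zero, Matrix.cons_val_succ,
    Fin.isValue, Pi.smul_apply, Pi.add_apply, Pi.sub_apply, Pi.single_apply, smul_eq_mul,
    reduceIte]
  try norm_num
  try simp only [← Matrix.mulVec_mulVec, Matrix.add_mulVec, Matrix.sub_mulVec,
    Matrix.smul_mulVec, Matrix.zero_mulVec, Matrix.neg_mulVec, g0_mulVec, g1_mulVec,
    g2_mulVec, g3_mulVec, g4_mulVec, g5_mulVec, g6_mulVec]
  try (funext j)
  try (fin_cases j <;> (simp [Fin.isValue]; try field_simp; try ring))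

lemma aux1 (t r s : ℝ) (h : r^2 + s^2 ≠ 0) :
    (spinLift ((Aex2 t) 1)).mulVec ![0, 0, 0, 0, r, s, -r, s]
      + (clContr (Trs t r s) 1).mulVec ![0, 0, 0, 0, r, s, -r, s] = 0
    := by
  simp (config := { decide := true }) only [spinLift, Aex2, Fin.sum_univ_seven, Fin.isValue,
    vec7_at0, vec7_at1, vec7_at2, vec7_at3, vec7_at4, vec7_at5, vec7_at6,
    E7, Matrix.smul_apply, Matrix.add_apply, Matrix.sub_apply, Matrix.single,
    Matrix.of_apply, Matrix.zero_apply, smul_eq_mul, reduceIte]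
  simp (config := { decide := true }) only [clContr, contr, Trs, tri, etaP, etaM, bv,
    Fin.sum_univ_succ, Finset.sum_empty, Matrix.cons_val_zero, Matrix.cons_val_succ,
    Fin.isValue, Pi.smul_apply, Pi.add_apply, Pi.sub_apply, Pi.single_apply, smul_eq_mul,
    reduceIte]
  try norm_num
  try simp only [← Matrix.mulVec_mulVec, Matrix.add_mulVec, Matrix.sub_mulVec,
    Matrix.smul_mulVec, Matrix.zero_mulVec, Matrix.neg_mulVec, g0_mulVec, g1_mulVec,
    g2_mulVec, g3_mulVec, g4_mulVec, g5_mulVec, g6_mulVec]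
  try (funext j)
  try (fin_cases j <;> (simp [Fin.isValue]; try field_simp; try ring))

lemma aux2 (t r s : ℝ) (h : r^2 + s^2 ≠ 0) :
    (spinLift ((Aex2 t) 2)).mulVec ![0, 0, 0, 0, r, s, -r, s]
      + (clContr (Trs t r s) 2).mulVec ![0, 0, 0, 0, r, s, -r, s] = 0
    := by
  simp (config := { decide := true }) only [spinLift, Aex2, Fin.sum_univ_seven, Fin.isValue,
    vec7_at0, vec7_at1, vec7_at2, vec7_at3, vec7_at4, vec7_at5, vec7_at6,
    E7, Matrix.smul_apply, Matrix.add_apply, Matrix.sub_apply, Matrix.single,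
    Matrix.of_apply, Matrix.zero_apply, smul_eq_mul, reduceIte]
  simp (config := { decide := true }) only [clContr, contr, Trs, tri, etaP, etaM, bv,
    Fin.sum_univ_succ, Finset.sum_empty, Matrix.cons_val_zero, Matrix.cons_val_succ,
    Fin.isValue, Pi.smul_apply, Pi.add_apply, Pi.sub_apply, Pi.single_apply, smul_eq_mul,
    reduceIte]
  try norm_num
  try simp only [← Matrix.mulVec_mulVec, Matrix.add_mulVec, Matrix.sub_mulVec,
    Matrix.smul_mulVec, Matrix.zero_mulVec, Matrix.neg_mulVec, g0_mulVec, g1_mulVec,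
    g2_mulVec, g3_mulVec, g4_mulVec, g5_mulVec, g6_mulVec]
  try (funext j)
  try (fin_cases j <;> (simp [Fin.isValue]; try field_simp; try ring))

lemma aux3 (t r s : ℝ) (h : r^2 + s^2 ≠ 0) :
    (spinLift ((Aex2 t) 3)).mulVec ![0, 0, 0, 0, r, s, -r, s]
      + (clContr (Trs t r s) 3).mulVec ![0, 0, 0, 0, r, s, -r, s] = 0
    := by
  simp (config := { decide := true }) only [spinLift, Aex2, Fin.sum_univ_seven, Fin.isValue,
    vec7_at0, vec7_at1, vec7_at2, vec7_at3, vec7_at4, vec7_at5, vec7_at6,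
    E7, Matrix.smul_apply, Matrix.add_apply, Matrix.sub_apply, Matrix.single,
    Matrix.of_apply, Matrix.zero_apply, smul_eq_mul, reduceIte]
  simp (config := { decide := true }) only [clContr, contr, Trs, tri, etaP, etaM, bv,
    Fin.sum_univ_succ, Finset.sum_empty, Matrix.cons_val_zero, Matrix.cons_val_succ,
    Fin.isValue, Pi.smul_apply, Pi.add_apply, Pi.sub_apply, Pi.single_apply, smul_eq_mul,
    reduceIte]
  try norm_num
  try simp only [← Matrix.mulVec_mulVec, Matrix.add_mulVec, Matrix.sub_mulVec,
    Matrix.smul_mulVec, Matrix.zero_mulVec, Matrix.neg_mulVec, g0_mulVec, g1_mulVec,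
    g2_mulVec, g3_mulVec, g4_mulVec, g5_mulVec, g6_mulVec]
  try (funext j)
  try (fin_cases j <;> (simp [Fin.isValue]; try field_simp; try ring))

lemma aux4 (t r s : ℝ) (h : r^2 + s^2 ≠ 0) :
    (spinLift ((Aex2 t) 4)).mulVec ![0, 0, 0, 0, r, s, -r, s]
      + (clContr (Trs t r s) 4).mulVec ![0, 0, 0, 0, r, s, -r, s] = 0
    := by
  simp (config := { decide := true }) only [spinLift, Aex2, Fin.sum_univ_seven, Fin.isValue,
    vec7_at0, vec7_at1, vec7_at2, vec7_at3, vec7_at4, vec7_at5, vec7_at6,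
    E7, Matrix.smul_apply, Matrix.add_apply, Matrix.sub_apply, Matrix.single,
    Matrix.of_apply, Matrix.zero_apply, smul_eq_mul, reduceIte]
  simp (config := { decide := true }) only [clContr, contr, Trs, tri, etaP, etaM, bv,
    Fin.sum_univ_succ, Finset.sum_empty, Matrix.cons_val_zero, Matrix.cons_val_succ,
    Fin.isValue, Pi.smul_apply, Pi.add_apply, Pi.sub_apply, Pi.single_apply, smul_eq_mul,
    reduceIte]
  try norm_num
  try simp only [← Matrix.mulVec_mulVec, Matrix.add_mulVec, Matrix.sub_mulVec,
    Matrix.smul_mulVec, Matrix.zero_mulVec, Matrix.neg_mulVec, g0_mulVec, g1_mulVec,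
    g2_mulVec, g3_mulVec, g4_mulVec, g5_mulVec, g6_mulVec]
  try (funext j)
  try (fin_cases j <;> (simp [Fin.isValue]; try field_simp; try ring))

lemma aux5 (t r s : ℝ) (h : r^2 + s^2 ≠ 0) :
    (spinLift ((Aex2 t) 5)).mulVec ![0, 0, 0, 0, r, s, -r, s]
      + (clContr (Trs t r s) 5).mulVec ![0, 0, 0, 0, r, s, -r, s] = 0
    := by
  simp (config := { decide := true }) only [spinLift, Aex2, Fin.sum_univ_seven, Fin.isValue,
    vec7_at0, vec7_at1, vec7_at2, vec7_at3, vec7_at4, vec7_at5, vec7_at6,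
    E7, Matrix.smul_apply, Matrix.add_apply, Matrix.sub_apply, Matrix.single,
    Matrix.of_apply, Matrix.zero_apply, smul_eq_mul, reduceIte]
  simp (config := { decide := true }) only [clContr, contr, Trs, tri, etaP, etaM, bv,
    Fin.sum_univ_succ, Finset.sum_empty, Matrix.cons_val_zero, Matrix.cons_val_succ,
    Fin.isValue, Pi.smul_apply, Pi.add_apply, Pi.sub_apply, Pi.single_apply, smul_eq_mul,
    reduceIte]
  try norm_num
  try simp only [← Matrix.mulVec_mulVec, Matrix.add_mulVec, Matrix.sub_mulVec,
    Matrix.smul_mulVec, Matrix.zero_mulVec, Matrix.neg_mulVec, g0_mulVec, g1_mulVec,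
    g2_mulVec, g3_mulVec, g4_mulVec, g5_mulVec, g6_mulVec]
  try (funext j)
  try (fin_cases j <;> (simp [Fin.isValue]; try field_simp; try ring))

lemma aux6 (t r s : ℝ) (h : r^2 + s^2 ≠ 0) :
    (spinLift ((Aex2 t) 6)).mulVec ![0, 0, 0, 0, r, s, -r, s]
      + (clContr (Trs t r s) 6).mulVec ![0, 0, 0, 0, r, s, -r, s] = 0
    := by
  simp (config := { decide := true }) only [spinLift, Aex2, Fin.sum_univ_seven, Fin.isValue,
    vec7_at0, vec7_at1, vec7_at2, vec7_at3, vec7_at4, vec7_at5, vec7_at6,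
    E7, Matrix.smul_apply, Matrix.add_apply, Matrix.sub_apply, Matrix.single,
    Matrix.of_apply, Matrix.zero_apply, smul_eq_mul, reduceIte]
  simp (config := { decide := true }) only [clContr, contr, Trs, tri, etaP, etaM, bv,
    Fin.sum_univ_succ, Finset.sum_empty, Matrix.cons_val_zero, Matrix.cons_val_succ,
    Fin.isValue, Pi.smul_apply, Pi.add_apply, Pi.sub_apply, Pi.single_apply, smul_eq_mul,
    reduceIte]
  try norm_num
  try simp only [← Matrix.mulVec_mulVec, Matrix.add_mulVec, Matrix.sub_mulVec,
    Matrix.smul_mulVec, Matrix.zero_mulVec, Matrix.neg_mulVec, g0_mulVec, g1_mulVec,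
    g2_mulVec, g3_mulVec, g4_mulVec, g5_mulVec, g6_mulVec]
  try (funext j)
  try (fin_cases j <;> (simp [Fin.isValue]; try field_simp; try ring))

/-- the spinor `ψ_{r,s}` is `∇ᵀ`-parallel for `T_{r,s}`. -/
theorem stmt3 (t : ℝ) (ht : 0 < t) (r s : ℝ) (hrs : (r, s) ≠ (0, 0)) :
    IsParallel (Aex2 t) (Trs t r s) ![0, 0, 0, 0, r, s, -r, s] := by
  have h : r^2 + s^2 ≠ 0 := by
    intro h0
    apply hrs
    have hr : r = 0 := by nlinarith [sq_nonneg r, sq_nonneg s]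
    have hs : s = 0 := by nlinarith [sq_nonneg r, sq_nonneg s]
    simp [hr, hs]
  intro i
  fin_cases i
  · exact aux0 t r s h
  · exact aux1 t r s h
  · exact aux2 t r s h
  · exact aux3 t r s h
  · exact aux4 t r s h
  · exact aux5 t r s h
  · exact aux6 t r s h
end
end

section
/- (Unique invariant parallel spinor for example (2).) Fix t > 0 and let A₁,…,A₇ be the connection matrices of example (2). Then the space {ψ ∈ ℝ⁸ : σ(A_i)·ψ = 0 for all i = 1,…,7} is exactly the one-dimensional line spanned by Ψ = (0,0,0,0,1,1,−1,1). -/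
open Matrix

noncomputable section

lemma cv0 (x0 x1 x2 x3 x4 x5 x6 x7 : ℝ) : (![x0, x1, x2, x3, x4, x5, x6, x7] : Fin 8 → ℝ) 0 = x0 := rfl
lemma cv1 (x0 x1 x2 x3 x4 x5 x6 x7 : ℝ) : (![x0, x1, x2, x3, x4, x5, x6, x7] : Fin 8 → ℝ) 1 = x1 := rfl
lemma cv2 (x0 x1 x2 x3 x4 x5 x6 x7 : ℝ) : (![x0, x1, x2, x3, x4, x5, x6, x7] : Fin 8 → ℝ) 2 = x2 := rfl
lemma cv3 (x0 x1 x2 x3 x4 x5 x6 x7 : ℝ) : (![x0, x1, x2, x3, x4, x5, x6, x7] : Fin 8 → ℝ) 3 = x3 := rfl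
lemma cv4 (x0 x1 x2 x3 x4 x5 x6 x7 : ℝ) : (![x0, x1, x2, x3, x4, x5, x6, x7] : Fin 8 → ℝ) 4 = x4 := rfl
lemma cv5 (x0 x1 x2 x3 x4 x5 x6 x7 : ℝ) : (![x0, x1, x2, x3, x4, x5, x6, x7] : Fin 8 → ℝ) 5 = x5 := rfl
lemma cv6 (x0 x1 x2 x3 x4 x5 x6 x7 : ℝ) : (![x0, x1, x2, x3, x4, x5, x6, x7] : Fin 8 → ℝ) 6 = x6 := rfl
lemma cv7 (x0 x1 x2 x3 x4 x5 x6 x7 : ℝ) : (![x0, x1, x2, x3, x4, x5, x6, x7] : Fin 8 → ℝ) 7 = x7 := rfl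
lemma cvm0 (h : 0 < 8) (x0 x1 x2 x3 x4 x5 x6 x7 : ℝ) : (![x0, x1, x2, x3, x4, x5, x6, x7] : Fin 8 → ℝ) ⟨0, h⟩ = x0 := rfl
lemma cvm1 (h : 1 < 8) (x0 x1 x2 x3 x4 x5 x6 x7 : ℝ) : (![x0, x1, x2, x3, x4, x5, x6, x7] : Fin 8 → ℝ) ⟨1, h⟩ = x1 := rfl
lemma cvm2 (h : 2 < 8) (x0 x1 x2 x3 x4 x5 x6 x7 : ℝ) : (![x0, x1, x2, x3, x4, x5, x6, x7] : Fin 8 → ℝ) ⟨2, h⟩ = x2 := rfl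
lemma cvm3 (h : 3 < 8) (x0 x1 x2 x3 x4 x5 x6 x7 : ℝ) : (![x0, x1, x2, x3, x4, x5, x6, x7] : Fin 8 → ℝ) ⟨3, h⟩ = x3 := rfl
lemma cvm4 (h : 4 < 8) (x0 x1 x2 x3 x4 x5 x6 x7 : ℝ) : (![x0, x1, x2, x3, x4, x5, x6, x7] : Fin 8 → ℝ) ⟨4, h⟩ = x4 := rfl
lemma cvm5 (h : 5 < 8) (x0 x1 x2 x3 x4 x5 x6 x7 : ℝ) : (![x0, x1, x2, x3, x4, x5, x6, x7] : Fin 8 → ℝ) ⟨5, h⟩ = x5 := rfl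
lemma cvm6 (h : 6 < 8) (x0 x1 x2 x3 x4 x5 x6 x7 : ℝ) : (![x0, x1, x2, x3, x4, x5, x6, x7] : Fin 8 → ℝ) ⟨6, h⟩ = x6 := rfl
lemma cvm7 (h : 7 < 8) (x0 x1 x2 x3 x4 x5 x6 x7 : ℝ) : (![x0, x1, x2, x3, x4, x5, x6, x7] : Fin 8 → ℝ) ⟨7, h⟩ = x7 := rfl

lemma gv0 (ψ : Fin 8 → ℝ) : (g 0).mulVec ψ = ![-(ψ 7), -(ψ 6), ψ 5, ψ 4, -(ψ 3), -(ψ 2), ψ 1, ψ 0] := by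
  rw [show g 0 = E8 0 7 + E8 1 6 - E8 2 5 - E8 3 4 from rfl]
  funext j
  fin_cases j <;> simp [E8, Matrix.mulVec, dotProduct, Fin.sum_univ_eight, Matrix.single] <;> rfl

lemma gv1 (ψ : Fin 8 → ℝ) : (g 1).mulVec ψ = ![ψ 6, -(ψ 7), -(ψ 4), ψ 5, ψ 2, -(ψ 3), -(ψ 0), ψ 1] := by
  rw [show g 1 = -E8 0 6 + E8 1 7 + E8 2 4 - E8 3 5 from rfl]
  funext j
  fin_cases j <;> simp [E8, Matrix.mulVec, dotProduct, Fin.sum_univ_eight, Matrix.single] <;> rfl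

lemma gv2 (ψ : Fin 8 → ℝ) : (g 2).mulVec ψ = ![ψ 5, -(ψ 4), ψ 7, -(ψ 6), ψ 1, -(ψ 0), ψ 3, -(ψ 2)] := by
  rw [show g 2 = -E8 0 5 + E8 1 4 - E8 2 7 + E8 3 6 from rfl]
  funext j
  fin_cases j <;> simp [E8, Matrix.mulVec, dotProduct, Fin.sum_univ_eight, Matrix.single] <;> rfl

lemma gv3 (ψ : Fin 8 → ℝ) : (g 3).mulVec ψ = ![ψ 4, ψ 5, ψ 6, ψ 7, -(ψ 0), -(ψ 1), -(ψ 2), -(ψ 3)] := by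
  rw [show g 3 = -E8 0 4 - E8 1 5 - E8 2 6 - E8 3 7 from rfl]
  funext j
  fin_cases j <;> simp [E8, Matrix.mulVec, dotProduct, Fin.sum_univ_eight, Matrix.single] <;> rfl

lemma gv4 (ψ : Fin 8 → ℝ) : (g 4).mulVec ψ = ![ψ 2, ψ 3, -(ψ 0), -(ψ 1), -(ψ 6), -(ψ 7), ψ 4, ψ 5] := by
  rw [show g 4 = -E8 0 2 - E8 1 3 + E8 4 6 + E8 5 7 from rfl]
  funext j
  fin_cases j <;> simp [E8, Matrix.mulVec, dotProduct, Fin.sum_univ_eight, Matrix.single] <;> rfl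

lemma gv5 (ψ : Fin 8 → ℝ) : (g 5).mulVec ψ = ![-(ψ 3), ψ 2, -(ψ 1), ψ 0, ψ 7, -(ψ 6), ψ 5, -(ψ 4)] := by
  rw [show g 5 = E8 0 3 - E8 1 2 - E8 4 7 + E8 5 6 from rfl]
  funext j
  fin_cases j <;> simp [E8, Matrix.mulVec, dotProduct, Fin.sum_univ_eight, Matrix.single] <;> rfl

lemma gv6 (ψ : Fin 8 → ℝ) : (g 6).mulVec ψ = ![-(ψ 1), ψ 0, ψ 3, -(ψ 2), ψ 5, -(ψ 4), -(ψ 7), ψ 6] := by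
  rw [show g 6 = E8 0 1 - E8 2 3 - E8 4 5 + E8 6 7 from rfl]
  funext j
  fin_cases j <;> simp [E8, Matrix.mulVec, dotProduct, Fin.sum_univ_eight, Matrix.single] <;> rfl

lemma key0 (t : ℝ) (ψ : Fin 8 → ℝ) : (spinLift (Aex2 t 0)).mulVec ψ =
    ![t * ((1/2 : ℝ) * ψ 5 + (1/1 : ℝ) * ψ 6 + (1/2 : ℝ) * ψ 7), t * ((1/2 : ℝ) * ψ 4 + (-1/2 : ℝ) * ψ 6 + (-1/1 : ℝ) * ψ 7), t * ((1/1 : ℝ) * ψ 4 + (-1/2 : ℝ) * ψ 5 + (-1/2 : ℝ) * ψ 7), t * ((1/2 : ℝ) * ψ 4 + (-1/1 : ℝ) * ψ 5 + (-1/2 : ℝ) * ψ 6), t * ((-1/2 : ℝ) * ψ 1 + (-1/1 : ℝ) * ψ 2 + (-1/2 : ℝ) * ψ 3), t * ((-1/2 : ℝ) * ψ 0 + (1/2 : ℝ) * ψ 2 + (1/1 : ℝ) * ψ 3), t * ((-1/1 : ℝ) * ψ 0 + (1/2 : ℝ) * ψ 1 + (1/2 : ℝ) * ψ 3), t * ((-1/2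 : ℝ) * ψ 0 + (1/1 : ℝ) * ψ 1 + (1/2 : ℝ) * ψ 2)] := by
  have hsl : spinLift (Aex2 t 0) = (((-1/1 : ℝ) * t)) • (g 0 * g 6) + (((-1/2 : ℝ) * t)) • (g 2 * g 4) + (((1/2 : ℝ) * t)) • (g 1 * g 5) := by
    rw [show Aex2 t 0 = (-t) • ((2:ℝ) • E7 0 6 + E7 2 4 - E7 1 5) from rfl]
    simp [spinLift, Fin.sum_univ_seven, E7, Matrix.single]
    module
  rw [hsl]
  simp only [Matrix.add_mulVec, Matrix.smul_mulVec, ← Matrix.mulVec_mulVec,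
    gv0, gv1, gv2, gv3, gv4, gv5, gv6, cv0, cv1, cv2, cv3, cv4, cv5, cv6, cv7, cvm0, cvm1, cvm2, cvm3, cvm4, cvm5, cvm6, cvm7]
  funext j
  fin_cases j <;>
    simp only [Pi.add_apply, Pi.smul_apply, cv0, cv1, cv2, cv3, cv4, cv5, cv6, cv7, cvm0, cvm1, cvm2, cvm3, cvm4, cvm5, cvm6, cvm7, smul_eq_mul] <;> ring

lemma key1 (t : ℝ) (ψ : Fin 8 → ℝ) : (spinLift (Aex2 t 1)).mulVec ψ =
    ![t * ((-1/2 : ℝ) * ψ 4 + (1/2 : ℝ) * ψ 6 + (1/1 : ℝ) * ψ 7), t * ((1/2 : ℝ) * ψ 5 + (1/1 : ℝ) * ψ 6 + (1/2 : ℝ) * ψ 7), t * ((-1/2 : ℝ) * ψ 4 + (1/1 : ℝ) * ψ 5 + (1/2 : ℝ) * ψ 6), t * ((1/1 : ℝ) * ψ 4 + (-1/2 : ℝ) * ψ 5 + (-1/2 : ℝ) * ψ 7), t * ((1/2 : ℝ) * ψ 0 + (1/2 : ℝ) * ψ 2 + (-1/1 : ℝ) * ψ 3), t * ((-1/2 :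 ℝ) * ψ 1 + (-1/1 : ℝ) * ψ 2 + (1/2 : ℝ) * ψ 3), t * ((-1/2 : ℝ) * ψ 0 + (-1/1 : ℝ) * ψ 1 + (-1/2 : ℝ) * ψ 2), t * ((-1/1 : ℝ) * ψ 0 + (-1/2 : ℝ) * ψ 1 + (1/2 : ℝ) * ψ 3)] := by
  have hsl : spinLift (Aex2 t 1) = (((-1/2 : ℝ) * t)) • (g 0 * g 5) + (((-1/1 : ℝ) * t)) • (g 1 * g 6) + (((-1/2 : ℝ) * t)) • (g 3 * g 4) := by
    rw [show Aex2 t 1 = (-t) • (E7 0 5 + (2:ℝ) • E7 1 6 + E7 3 4) from rfl]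
    simp [spinLift, Fin.sum_univ_seven, E7, Matrix.single]
    module
  rw [hsl]
  simp only [Matrix.add_mulVec, Matrix.smul_mulVec, ← Matrix.mulVec_mulVec,
    gv0, gv1, gv2, gv3, gv4, gv5, gv6, cv0, cv1, cv2, cv3, cv4, cv5, cv6, cv7, cvm0, cvm1, cvm2, cvm3, cvm4, cvm5, cvm6, cvm7]
  funext j
  fin_cases j <;>
    simp only [Pi.add_apply, Pi.smul_apply, cv0, cv1, cv2, cv3, cv4, cv5, cv6, cv7, cvm0, cvm1, cvm2, cvm3, cvm4, cvm5, cvm6, cvm7, smul_eq_mul] <;> ring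

lemma key2 (t : ℝ) (ψ : Fin 8 → ℝ) : (spinLift (Aex2 t 2)).mulVec ψ =
    ![t * ((-1/2 : ℝ) * ψ 4 + (1/2 : ℝ) * ψ 5), t * ((1/2 : ℝ) * ψ 4 + (-1/2 : ℝ) * ψ 5), t * ((1/2 : ℝ) * ψ 6 + (1/2 : ℝ) * ψ 7), t * ((1/2 : ℝ) * ψ 6 + (1/2 : ℝ) * ψ 7), t * ((1/2 : ℝ) * ψ 0 + (-1/2 : ℝ) * ψ 1), t * ((-1/2 : ℝ) * ψ 0 + (1/2 : ℝ) * ψ 1), t * ((-1/2 : ℝ) * ψ 2 + (-1/2 : ℝ) * ψ 3), t * ((-1/2 : ℝ) * ψ 2 + (-1/2 : ℝ) * ψ 3)] := by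
  have hsl : spinLift (Aex2 t 2) = (((-1/2 : ℝ) * t)) • (g 0 * g 4) + (((1/2 : ℝ) * t)) • (g 2 * g 6) := by
    rw [show Aex2 t 2 = (-t) • (E7 0 4 - E7 2 6) from rfl]
    simp [spinLift, Fin.sum_univ_seven, E7, Matrix.single]
    module
  rw [hsl]
  simp only [Matrix.add_mulVec, Matrix.smul_mulVec, ← Matrix.mulVec_mulVec,
    gv0, gv1, gv2, gv3, gv4, gv5, gv6, cv0, cv1, cv2, cv3, cv4, cv5, cv6, cv7, cvm0, cvm1, cvm2, cvm3, cvm4, cvm5, cvm6, cvm7]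
  funext j
  fin_cases j <;>
    simp only [Pi.add_apply, Pi.smul_apply, cv0, cv1, cv2, cv3, cv4, cv5, cv6, cv7, cvm0, cvm1, cvm2, cvm3, cvm4, cvm5, cvm6, cvm7, smul_eq_mul] <;> ring

lemma key3 (t : ℝ) (ψ : Fin 8 → ℝ) : (spinLift (Aex2 t 3)).mulVec ψ =
    ![t * ((-1/2 : ℝ) * ψ 4 + (1/2 : ℝ) * ψ 5), t * ((-1/2 : ℝ) * ψ 4 + (1/2 : ℝ) * ψ 5), t * ((-1/2 : ℝ) * ψ 6 + (-1/2 : ℝ) * ψ 7), t * ((1/2 : ℝ) * ψ 6 + (1/2 : ℝ) * ψ 7), t * ((1/2 : ℝ) * ψ 0 + (1/2 : ℝ) * ψ 1), t * ((-1/2 : ℝ) * ψ 0 + (-1/2 : ℝ) * ψ 1), t * ((1/2 : ℝ) * ψ 2 + (-1/2 : ℝ) * ψ 3), t * ((1/2 : ℝ) * ψ 2 + (-1/2 : ℝ) * ψ 3)] := by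
  have hsl : spinLift (Aex2 t 3) = (((-1/2 : ℝ) * t)) • (g 1 * g 4) + (((1/2 : ℝ) * t)) • (g 3 * g 6) := by
    rw [show Aex2 t 3 = (-t) • (E7 1 4 - E7 3 6) from rfl]
    simp [spinLift, Fin.sum_univ_seven, E7, Matrix.single]
    module
  rw [hsl]
  simp only [Matrix.add_mulVec, Matrix.smul_mulVec, ← Matrix.mulVec_mulVec,
    gv0, gv1, gv2, gv3, gv4, gv5, gv6, cv0, cv1, cv2, cv3, cv4, cv5, cv6, cv7, cvm0, cvm1, cvm2, cvm3, cvm4, cvm5, cvm6, cvm7]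
  funext j
  fin_cases j <;>
    simp only [Pi.add_apply, Pi.smul_apply, cv0, cv1, cv2, cv3, cv4, cv5, cv6, cv7, cvm0, cvm1, cvm2, cvm3, cvm4, cvm5, cvm6, cvm7, smul_eq_mul] <;> ring

lemma key4 (t : ℝ) (ψ : Fin 8 → ℝ) : (spinLift (Aex2 t 4)).mulVec ψ =
    ![t * ((-1/1 : ℝ) * ψ 3), t * ((1/1 : ℝ) * ψ 2), t * ((-1/1 : ℝ) * ψ 1), t * ((1/1 : ℝ) * ψ 0), t * ((-1/1 : ℝ) * ψ 6 + (-1/1 : ℝ) * ψ 7), t * ((1/1 : ℝ) * ψ 6 + (1/1 : ℝ) * ψ 7), t * ((1/1 : ℝ) * ψ 4 + (-1/1 : ℝ) * ψ 5), t * ((1/1 : ℝ) * ψ 4 + (-1/1 : ℝ) * ψ 5)] := by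
  have hsl : spinLift (Aex2 t 4) = (((-1/2 : ℝ) * t)) • (g 0 * g 2) + (((-1/2 : ℝ) * t)) • (g 1 * g 3) + (((-1/1 : ℝ) * t)) • (g 4 * g 6) := by
    rw [show Aex2 t 4 = (-t) • (E7 0 2 + E7 1 3 + (2:ℝ) • E7 4 6) from rfl]
    simp [spinLift, Fin.sum_univ_seven, E7, Matrix.single]
    module
  rw [hsl]
  simp only [Matrix.add_mulVec, Matrix.smul_mulVec, ← Matrix.mulVec_mulVec,
    gv0, gv1, gv2, gv3, gv4, gv5, gv6, cv0, cv1, cv2, cv3, cv4, cv5, cv6, cv7, cvm0, cvm1, cvm2, cvm3, cvm4, cvm5, cvm6, cvm7]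
  funext j
  fin_cases j <;>
    simp only [Pi.add_apply, Pi.smul_apply, cv0, cv1, cv2, cv3, cv4, cv5, cv6, cv7, cvm0, cvm1, cvm2, cvm3, cvm4, cvm5, cvm6, cvm7, smul_eq_mul] <;> ring

lemma key5 (t : ℝ) (ψ : Fin 8 → ℝ) : (spinLift (Aex2 t 5)).mulVec ψ =
    ![t * ((1/2 : ℝ) * ψ 1 + (1/2 : ℝ) * ψ 2), t * ((-1/2 : ℝ) * ψ 0 + (1/2 : ℝ) * ψ 3), t * ((-1/2 : ℝ) * ψ 0 + (1/2 : ℝ) * ψ 3), t * ((-1/2 : ℝ) * ψ 1 + (-1/2 : ℝ) * ψ 2), t * ((1/2 : ℝ) * ψ 5 + (1/2 : ℝ) * ψ 6), t * ((-1/2 : ℝ) * ψ 4 + (1/2 : ℝ) * ψ 7), t * ((-1/2 : ℝ) * ψ 4 + (1/2 : ℝ) * ψ 7), t * ((-1/2 : ℝ) * ψ 5 + (-1/2 : ℝ) * ψ 6)] := by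
  have hsl : spinLift (Aex2 t 5) = (((-1/2 : ℝ) * t)) • (g 0 * g 1) + (((1/2 : ℝ) * t)) • (g 5 * g 6) := by
    rw [show Aex2 t 5 = (-t) • (E7 0 1 - E7 5 6) from rfl]
    simp [spinLift, Fin.sum_univ_seven, E7, Matrix.single]
    module
  rw [hsl]
  simp only [Matrix.add_mulVec, Matrix.smul_mulVec, ← Matrix.mulVec_mulVec,
    gv0, gv1, gv2, gv3, gv4, gv5, gv6, cv0, cv1, cv2, cv3, cv4, cv5, cv6, cv7, cvm0, cvm1, cvm2, cvm3, cvm4, cvm5, cvm6, cvm7]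
  funext j
  fin_cases j <;>
    simp only [Pi.add_apply, Pi.smul_apply, cv0, cv1, cv2, cv3, cv4, cv5, cv6, cv7, cvm0, cvm1, cvm2, cvm3, cvm4, cvm5, cvm6, cvm7, smul_eq_mul] <;> ring

lemma key6 (t : ℝ) (ψ : Fin 8 → ℝ) : (spinLift (Aex2 t 6)).mulVec ψ =
    ![t * (0), t * (0), t * (0), t * (0), t * (0), t * (0), t * (0), t * (0)] := by
  rw [show Aex2 t 6 = 0 from rfl]
  have h0 : spinLift (0 : Matrix (Fin 7) (Fin 7) ℝ) = 0 := by
    simp [spinLift]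
  rw [h0]
  funext j
  fin_cases j <;> simp <;> rfl


lemma zk0 (t a : ℝ) : (spinLift (Aex2 t 0)).mulVec (a • ![0, 0, 0, 0, 1, 1, -1, 1]) = 0 := by
  rw [key0]
  funext j
  fin_cases j <;>
    simp only [Pi.smul_apply, cv0, cv1, cv2, cv3, cv4, cv5, cv6, cv7, cvm0, cvm1, cvm2, cvm3, cvm4, cvm5, cvm6, cvm7, smul_eq_mul, Pi.zero_apply] <;> ring

lemma zk1 (t a : ℝ) : (spinLift (Aex2 t 1)).mulVec (a • ![0, 0, 0, 0, 1, 1, -1, 1]) = 0 := by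
  rw [key1]
  funext j
  fin_cases j <;>
    simp only [Pi.smul_apply, cv0, cv1, cv2, cv3, cv4, cv5, cv6, cv7, cvm0, cvm1, cvm2, cvm3, cvm4, cvm5, cvm6, cvm7, smul_eq_mul, Pi.zero_apply] <;> ring

lemma zk2 (t a : ℝ) : (spinLift (Aex2 t 2)).mulVec (a • ![0, 0, 0, 0, 1, 1, -1, 1]) = 0 := by
  rw [key2]
  funext j
  fin_cases j <;>
    simp only [Pi.smul_apply, cv0, cv1, cv2, cv3, cv4, cv5, cv6, cv7, cvm0, cvm1, cvm2, cvm3, cvm4, cvm5, cvm6, cvm7, smul_eq_mul, Pi.zero_apply] <;> ring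

lemma zk3 (t a : ℝ) : (spinLift (Aex2 t 3)).mulVec (a • ![0, 0, 0, 0, 1, 1, -1, 1]) = 0 := by
  rw [key3]
  funext j
  fin_cases j <;>
    simp only [Pi.smul_apply, cv0, cv1, cv2, cv3, cv4, cv5, cv6, cv7, cvm0, cvm1, cvm2, cvm3, cvm4, cvm5, cvm6, cvm7, smul_eq_mul, Pi.zero_apply] <;> ring

lemma zk4 (t a : ℝ) : (spinLift (Aex2 t 4)).mulVec (a • ![0, 0, 0, 0, 1, 1, -1, 1]) = 0 := by
  rw [key4]
  funext j
  fin_cases j <;>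
    simp only [Pi.smul_apply, cv0, cv1, cv2, cv3, cv4, cv5, cv6, cv7, cvm0, cvm1, cvm2, cvm3, cvm4, cvm5, cvm6, cvm7, smul_eq_mul, Pi.zero_apply] <;> ring

lemma zk5 (t a : ℝ) : (spinLift (Aex2 t 5)).mulVec (a • ![0, 0, 0, 0, 1, 1, -1, 1]) = 0 := by
  rw [key5]
  funext j
  fin_cases j <;>
    simp only [Pi.smul_apply, cv0, cv1, cv2, cv3, cv4, cv5, cv6, cv7, cvm0, cvm1, cvm2, cvm3, cvm4, cvm5, cvm6, cvm7, smul_eq_mul, Pi.zero_apply] <;> ring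

lemma zk6 (t a : ℝ) : (spinLift (Aex2 t 6)).mulVec (a • ![0, 0, 0, 0, 1, 1, -1, 1]) = 0 := by
  rw [key6]
  funext j
  fin_cases j <;> simp <;> rfl

set_option maxHeartbeats 1000000 in
/-- unique invariant parallel spinor for example (2). -/
theorem stmt16 (t : ℝ) (ht : 0 < t) :
    ∀ ψ : Fin 8 → ℝ, (∀ i : Fin 7, (spinLift (Aex2 t i)).mulVec ψ = 0) ↔
      ψ ∈ Submodule.span ℝ {(![0, 0, 0, 0, 1, 1, -1, 1] : Fin 8 → ℝ)} := by
  have ht' : t ≠ 0 := ne_of_gt ht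
  intro ψ
  constructor
  · intro h
    have h4 := h 4
    have h5 := h 5
    rw [key4 t ψ] at h4
    rw [key5 t ψ] at h5
    have f0 : (-1/1 : ℝ) * ψ 3 = 0 := by
      have e := congrFun h4 0
      simp only [cv0, Pi.zero_apply] at e
      exact (mul_eq_zero.1 e).resolve_left ht'
    have f1 : (1/1 : ℝ) * ψ 2 = 0 := by
      have e := congrFun h4 1
      simp only [cv1, Pi.zero_apply] at e
      exact (mul_eq_zero.1 e).resolve_left ht'
    have f2 : (-1/1 : ℝ) * ψ 1 = 0 := by
      have e := congrFun h4 2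
      simp only [cv2, Pi.zero_apply] at e
      exact (mul_eq_zero.1 e).resolve_left ht'
    have f3 : (1/1 : ℝ) * ψ 0 = 0 := by
      have e := congrFun h4 3
      simp only [cv3, Pi.zero_apply] at e
      exact (mul_eq_zero.1 e).resolve_left ht'
    have f5 : (1/1 : ℝ) * ψ 6 + (1/1 : ℝ) * ψ 7 = 0 := by
      have e := congrFun h4 5
      simp only [cv5, Pi.zero_apply] at e
      exact (mul_eq_zero.1 e).resolve_left ht'
    have f6 : (1/1 : ℝ) * ψ 4 + (-1/1 : ℝ) * ψ 5 = 0 := by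
      have e := congrFun h4 6
      simp only [cv6, Pi.zero_apply] at e
      exact (mul_eq_zero.1 e).resolve_left ht'
    have f7 : (-1/2 : ℝ) * ψ 4 + (1/2 : ℝ) * ψ 7 = 0 := by
      have e := congrFun h5 5
      simp only [cv5, Pi.zero_apply] at e
      exact (mul_eq_zero.1 e).resolve_left ht'
    rw [Submodule.mem_span_singleton]
    refine ⟨ψ 4, ?_⟩
    have hψ : ψ = ![ψ 0, ψ 1, ψ 2, ψ 3, ψ 4, ψ 5, ψ 6, ψ 7] := by
      funext j; fin_cases j <;> rfl
    conv_rhs => rw [hψ]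
    funext j
    fin_cases j <;>
      simp only [Pi.smul_apply, cv0, cv1, cv2, cv3, cv4, cv5, cv6, cv7, cvm0, cvm1, cvm2, cvm3, cvm4, cvm5, cvm6, cvm7, smul_eq_mul] <;>
      linarith [f0, f1, f2, f3, f5, f6, f7]
  · intro hm
    rw [Submodule.mem_span_singleton] at hm
    obtain ⟨a, rfl⟩ := hm
    intro i
    fin_cases i
    · exact zk0 t a
    · exact zk1 t a
    · exact zk2 t a
    · exact zk3 t a
    · exact zk4 t a
    · exact zk5 t a
    · exact zk6 t a
end
end

section
/- (Two invariant parallel spinors for example (3).) Fix t > 0 and let the connection matrices of example (3) be A₁ = −t(E₁₇+E₃₅), A₂ = 0, A₃ = −t(E₁₅−2E₃₇−E₄₆), A₄ = −t(−E₃₆+E₄₇), A₅ = −t(E₁₃+E₅₇), A₆ = −t(E₃₄+E₆₇), A₇ = 0. Then the space {ψ ∈ ℝ⁸ : σ(A_i)·ψ = 0 for all i = 1,…,7} is exactly the two-dimensional linear span of (0,0,0,0,1,1,−1,1) and (1,1,1,−1,0,0,0,0). -/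
open Matrix

set_option maxHeartbeats 1000000
noncomputable section

/-- Connection matrices of example (3). -/
def Aex3 (t : ℝ) : Fin 7 → Matrix (Fin 7) (Fin 7) ℝ :=
  ![(-t) • (E7 0 6 + E7 2 4), 0,
    (-t) • (E7 0 4 - (2:ℝ) • E7 2 6 - E7 3 5),
    (-t) • (-E7 2 5 + E7 3 6),
    (-t) • (E7 0 2 + E7 4 6),
    (-t) • (E7 2 3 + E7 5 6), 0]


section auxv
variable {α : Type*} (a0 a1 a2 a3 a4 a5 a6 a7 : α)
@[simp] lemma v8c0 : ![a0,a1,a2,a3,a4,a5,a6,a7] (0:Fin 8) = a0 := rfl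
@[simp] lemma v8c1 : ![a0,a1,a2,a3,a4,a5,a6,a7] (1:Fin 8) = a1 := rfl
@[simp] lemma v8c2 : ![a0,a1,a2,a3,a4,a5,a6,a7] (2:Fin 8) = a2 := rfl
@[simp] lemma v8c3 : ![a0,a1,a2,a3,a4,a5,a6,a7] (3:Fin 8) = a3 := rfl
@[simp] lemma v8c4 : ![a0,a1,a2,a3,a4,a5,a6,a7] (4:Fin 8) = a4 := rfl
@[simp] lemma v8c5 : ![a0,a1,a2,a3,a4,a5,a6,a7] (5:Fin 8) = a5 := rfl
@[simp] lemma v8c6 : ![a0,a1,a2,a3,a4,a5,a6,a7] (6:Fin 8) = a6 := rfl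
@[simp] lemma v8c7 : ![a0,a1,a2,a3,a4,a5,a6,a7] (7:Fin 8) = a7 := rfl
end auxv

def E8z (i j : Fin 8) : Matrix (Fin 8) (Fin 8) ℤ :=
  Matrix.single j i 1 - Matrix.single i j 1

def gz : Fin 7 → Matrix (Fin 8) (Fin 8) ℤ :=
  ![E8z 0 7 + E8z 1 6 - E8z 2 5 - E8z 3 4,
    -E8z 0 6 + E8z 1 7 + E8z 2 4 - E8z 3 5,
    -E8z 0 5 + E8z 1 4 - E8z 2 7 + E8z 3 6,
    -E8z 0 4 - E8z 1 5 - E8z 2 6 - E8z 3 7,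
    -E8z 0 2 - E8z 1 3 + E8z 4 6 + E8z 5 7,
    E8z 0 3 - E8z 1 2 - E8z 4 7 + E8z 5 6,
    E8z 0 1 - E8z 2 3 - E8z 4 5 + E8z 6 7]

def zr : ℤ →+* ℝ := Int.castRingHom ℝ

lemma E8_map (i j : Fin 8) : E8 i j = (E8z i j).map zr := by
  ext a b
  simp [E8, E8z, Matrix.single, Matrix.map_apply, apply_ite (zr : ℤ → ℝ), zr]

lemma gm0 : g 0 = (gz 0).map zr := by
  have h1 : g 0 = E8 0 7 + E8 1 6 - E8 2 5 - E8 3 4 := rfl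
  have h2 : gz 0 = E8z 0 7 + E8z 1 6 - E8z 2 5 - E8z 3 4 := rfl
  rw [h1, h2, E8_map, E8_map, E8_map, E8_map]
  ext a b
  simp [Matrix.map_apply, zr]
  all_goals (push_cast; try ring)

lemma gm1 : g 1 = (gz 1).map zr := by
  have h1 : g 1 = -E8 0 6 + E8 1 7 + E8 2 4 - E8 3 5 := rfl
  have h2 : gz 1 = -E8z 0 6 + E8z 1 7 + E8z 2 4 - E8z 3 5 := rfl
  rw [h1, h2, E8_map, E8_map, E8_map, E8_map]
  ext a b
  simp [Matrix.map_apply, zr]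
  all_goals (push_cast; try ring)

lemma gm2 : g 2 = (gz 2).map zr := by
  have h1 : g 2 = -E8 0 5 + E8 1 4 - E8 2 7 + E8 3 6 := rfl
  have h2 : gz 2 = -E8z 0 5 + E8z 1 4 - E8z 2 7 + E8z 3 6 := rfl
  rw [h1, h2, E8_map, E8_map, E8_map, E8_map]
  ext a b
  simp [Matrix.map_apply, zr]
  all_goals (push_cast; try ring)

lemma gm3 : g 3 = (gz 3).map zr := by
  have h1 : g 3 = -E8 0 4 - E8 1 5 - E8 2 6 - E8 3 7 := rfl
  have h2 : gz 3 = -E8z 0 4 - E8z 1 5 - E8z 2 6 - E8z 3 7 := rfl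
  rw [h1, h2, E8_map, E8_map, E8_map, E8_map]
  ext a b
  simp [Matrix.map_apply, zr]
  all_goals (push_cast; try ring)

lemma gm4 : g 4 = (gz 4).map zr := by
  have h1 : g 4 = -E8 0 2 - E8 1 3 + E8 4 6 + E8 5 7 := rfl
  have h2 : gz 4 = -E8z 0 2 - E8z 1 3 + E8z 4 6 + E8z 5 7 := rfl
  rw [h1, h2, E8_map, E8_map, E8_map, E8_map]
  ext a b
  simp [Matrix.map_apply, zr]
  all_goals (push_cast; try ring)

lemma gm5 : g 5 = (gz 5).map zr := by
  have h1 : g 5 = E8 0 3 - E8 1 2 - E8 4 7 + E8 5 6 := rfl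
  have h2 : gz 5 = E8z 0 3 - E8z 1 2 - E8z 4 7 + E8z 5 6 := rfl
  rw [h1, h2, E8_map, E8_map, E8_map, E8_map]
  ext a b
  simp [Matrix.map_apply, zr]
  all_goals (push_cast; try ring)

lemma gm6 : g 6 = (gz 6).map zr := by
  have h1 : g 6 = E8 0 1 - E8 2 3 - E8 4 5 + E8 6 7 := rfl
  have h2 : gz 6 = E8z 0 1 - E8z 2 3 - E8z 4 5 + E8z 6 7 := rfl
  rw [h1, h2, E8_map, E8_map, E8_map, E8_map]
  ext a b
  simp [Matrix.map_apply, zr]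
  all_goals (push_cast; try ring)

def L0 : Matrix (Fin 8) (Fin 8) ℤ :=
  !![0, 0, 0, 0, 0, 0, 1, 1;
     0, 0, 0, 0, 0, 0, (-1), (-1);
     0, 0, 0, 0, 1, (-1), 0, 0;
     0, 0, 0, 0, 1, (-1), 0, 0;
     0, 0, (-1), (-1), 0, 0, 0, 0;
     0, 0, 1, 1, 0, 0, 0, 0;
     (-1), 1, 0, 0, 0, 0, 0, 0;
     (-1), 1, 0, 0, 0, 0, 0, 0]
def L2 : Matrix (Fin 8) (Fin 8) ℤ :=
  !![0, 0, 0, 0, (-2), 1, 0, 1;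
     0, 0, 0, 0, 1, (-2), (-1), 0;
     0, 0, 0, 0, 0, 1, 2, 1;
     0, 0, 0, 0, (-1), 0, 1, 2;
     2, (-1), 0, 1, 0, 0, 0, 0;
     (-1), 2, (-1), 0, 0, 0, 0, 0;
     0, 1, (-2), (-1), 0, 0, 0, 0;
     (-1), 0, (-1), (-2), 0, 0, 0, 0]
def L3 : Matrix (Fin 8) (Fin 8) ℤ :=
  !![0, 0, 0, 0, 0, (-1), (-1), 0;
     0, 0, 0, 0, 1, 0, 0, (-1);
     0, 0, 0, 0, (-1), 0, 0, 1;
     0, 0, 0, 0, 0, (-1), (-1), 0;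
     0, (-1), 1, 0, 0, 0, 0, 0;
     1, 0, 0, 1, 0, 0, 0, 0;
     1, 0, 0, 1, 0, 0, 0, 0;
     0, 1, (-1), 0, 0, 0, 0, 0]
def L4 : Matrix (Fin 8) (Fin 8) ℤ :=
  !![0, 0, (-1), (-1), 0, 0, 0, 0;
     0, 0, 1, 1, 0, 0, 0, 0;
     1, (-1), 0, 0, 0, 0, 0, 0;
     1, (-1), 0, 0, 0, 0, 0, 0;
     0, 0, 0, 0, 0, 0, (-1), (-1);
     0, 0, 0, 0, 0, 0, 1, 1;
     0, 0, 0, 0, 1, (-1), 0, 0;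
     0, 0, 0, 0, 1, (-1), 0, 0]
def L5 : Matrix (Fin 8) (Fin 8) ℤ :=
  !![0, 1, (-1), 0, 0, 0, 0, 0;
     (-1), 0, 0, (-1), 0, 0, 0, 0;
     1, 0, 0, 1, 0, 0, 0, 0;
     0, 1, (-1), 0, 0, 0, 0, 0;
     0, 0, 0, 0, 0, (-1), (-1), 0;
     0, 0, 0, 0, 1, 0, 0, (-1);
     0, 0, 0, 0, 1, 0, 0, (-1);
     0, 0, 0, 0, 0, 1, 1, 0]


def NL0 : Matrix (Fin 8) (Fin 8) ℤ := -(gz 0 * gz 6 + gz 2 * gz 4)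
def NL2 : Matrix (Fin 8) (Fin 8) ℤ :=
  gz 2 * gz 6 + gz 2 * gz 6 + gz 3 * gz 5 - gz 0 * gz 4
def NL3 : Matrix (Fin 8) (Fin 8) ℤ := gz 2 * gz 5 - gz 3 * gz 6
def NL4 : Matrix (Fin 8) (Fin 8) ℤ := -(gz 0 * gz 2 + gz 4 * gz 6)
def NL5 : Matrix (Fin 8) (Fin 8) ℤ := -(gz 2 * gz 3 + gz 5 * gz 6)

lemma hL0 : NL0 = L0 := by decide
lemma hL2 : NL2 = L2 := by decide
lemma hL3 : NL3 = L3 := by decide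
lemma hL4 : NL4 = L4 := by decide
lemma hL5 : NL5 = L5 := by decide

lemma sl1 (t : ℝ) : spinLift (Aex3 t 1) = 0 := by
  have hA : Aex3 t 1 = 0 := rfl
  rw [spinLift, hA]; simp

lemma sl6 (t : ℝ) : spinLift (Aex3 t 6) = 0 := by
  have hA : Aex3 t 6 = 0 := rfl
  rw [spinLift, hA]; simp

lemma sl0 (t : ℝ) : spinLift (Aex3 t 0) = (t/2) • (L0.map zr) := by
  have hA : Aex3 t 0 = (-t) • (E7 0 6 + E7 2 4) := rfl
  rw [spinLift, hA, ← hL0]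
  simp (config := {decide := true}) [Fin.sum_univ_seven, E7, Matrix.single]
  rw [gm0, gm6, gm2, gm4, ← Matrix.map_mul, ← Matrix.map_mul]
  ext a b
  simp [NL0, Matrix.map_apply, zr]
  all_goals (push_cast; try ring)

lemma sl2 (t : ℝ) : spinLift (Aex3 t 2) = (t/2) • (L2.map zr) := by
  have hA : Aex3 t 2 = (-t) • (E7 0 4 - (2:ℝ) • E7 2 6 - E7 3 5) := rfl
  rw [spinLift, hA, ← hL2]
  simp (config := {decide := true}) [Fin.sum_univ_seven, E7, Matrix.single]
  rw [gm0, gm4, gm2, gm6, gm3, gm5, ← Matrix.map_mul, ← Matrix.map_mul, ← Matrix.map_mul]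
  ext a b
  simp [NL2, Matrix.map_apply, zr]
  all_goals (push_cast; try ring)

lemma sl3 (t : ℝ) : spinLift (Aex3 t 3) = (t/2) • (L3.map zr) := by
  have hA : Aex3 t 3 = (-t) • (-E7 2 5 + E7 3 6) := rfl
  rw [spinLift, hA, ← hL3]
  simp (config := {decide := true}) [Fin.sum_univ_seven, E7, Matrix.single]
  rw [gm2, gm5, gm3, gm6, ← Matrix.map_mul, ← Matrix.map_mul]
  ext a b
  simp [NL3, Matrix.map_apply, zr]
  all_goals (push_cast; try ring)

lemma sl4 (t : ℝ) : spinLift (Aex3 t 4) = (t/2) • (L4.map zr) := by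
  have hA : Aex3 t 4 = (-t) • (E7 0 2 + E7 4 6) := rfl
  rw [spinLift, hA, ← hL4]
  simp (config := {decide := true}) [Fin.sum_univ_seven, E7, Matrix.single]
  rw [gm0, gm2, gm4, gm6, ← Matrix.map_mul, ← Matrix.map_mul]
  ext a b
  simp [NL4, Matrix.map_apply, zr]
  all_goals (push_cast; try ring)

lemma sl5 (t : ℝ) : spinLift (Aex3 t 5) = (t/2) • (L5.map zr) := by
  have hA : Aex3 t 5 = (-t) • (E7 2 3 + E7 5 6) := rfl
  rw [spinLift, hA, ← hL5]
  simp (config := {decide := true}) [Fin.sum_univ_seven, E7, Matrix.single]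
  rw [gm2, gm3, gm5, gm6, ← Matrix.map_mul, ← Matrix.map_mul]
  ext a b
  simp [NL5, Matrix.map_apply, zr]
  all_goals (push_cast; try ring)


/-- two invariant parallel spinors for example (3). -/
theorem stmt18 (t : ℝ) (ht : 0 < t) :
    ∀ ψ : Fin 8 → ℝ, (∀ i : Fin 7, (spinLift (Aex3 t i)).mulVec ψ = 0) ↔
      ψ ∈ Submodule.span ℝ
        {(![0, 0, 0, 0, 1, 1, -1, 1] : Fin 8 → ℝ),
         ![1, 1, 1, -1, 0, 0, 0, 0]} := by
  intro ψ
  have ht2 : (t/2 : ℝ) ≠ 0 := by positivity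
  constructor
  · intro h
    have h0 : (L0.map zr).mulVec ψ = 0 := by
      have h' := h 0
      rw [sl0, Matrix.smul_mulVec] at h'
      exact (smul_eq_zero.mp h').resolve_left ht2
    have h2 : (L2.map zr).mulVec ψ = 0 := by
      have h' := h 2
      rw [sl2, Matrix.smul_mulVec] at h'
      exact (smul_eq_zero.mp h').resolve_left ht2
    have e1 := congrFun h0 0
    have e2 := congrFun h0 2
    have e3 := congrFun h0 4
    have e4 := congrFun h0 6
    have e5 := congrFun h2 0
    have e6 := congrFun h2 4
    norm_num [Matrix.mulVec, dotProduct, Fin.sum_univ_eight, Matrix.map_apply, -Matrix.cons_val', -Matrix.vecCons_const, Matrix.vecHead, Matrix.vecTail,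
      L0, L2, zr] at e1 e2 e3 e4 e5 e6
    rw [Submodule.mem_span_pair]
    refine ⟨ψ 4, ψ 0, ?_⟩
    funext j
    fin_cases j <;> simp [smul_eq_mul] <;> linarith [e1, e2, e3, e4, e5, e6]
  · intro h i
    rw [Submodule.mem_span_pair] at h
    obtain ⟨a, b, rfl⟩ := h
    fin_cases i
    · show spinLift (Aex3 t 0) *ᵥ _ = 0
      rw [sl0, Matrix.smul_mulVec]
      have hz : (L0.map zr).mulVec (a • ![0, 0, 0, 0, 1, 1, -1, 1] + b • ![1, 1, 1, -1, 0, 0, 0, 0]) = 0 := by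
        funext j
        fin_cases j <;>
          norm_num [Matrix.mulVec, dotProduct, Fin.sum_univ_eight, Matrix.map_apply, -Matrix.cons_val', -Matrix.vecCons_const, Matrix.vecHead, Matrix.vecTail,
            L0, zr, smul_eq_mul]
      rw [hz, smul_zero]
    · show spinLift (Aex3 t 1) *ᵥ _ = 0
      rw [sl1, Matrix.zero_mulVec]
    · show spinLift (Aex3 t 2) *ᵥ _ = 0
      rw [sl2, Matrix.smul_mulVec]
      have hz : (L2.map zr).mulVec (a • ![0, 0, 0, 0, 1, 1, -1, 1] + b • ![1, 1, 1, -1, 0, 0, 0, 0]) = 0 := by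
        funext j
        fin_cases j <;>
          norm_num [Matrix.mulVec, dotProduct, Fin.sum_univ_eight, Matrix.map_apply, -Matrix.cons_val', -Matrix.vecCons_const, Matrix.vecHead, Matrix.vecTail,
            L2, zr, smul_eq_mul] <;> ring
      rw [hz, smul_zero]
    · show spinLift (Aex3 t 3) *ᵥ _ = 0
      rw [sl3, Matrix.smul_mulVec]
      have hz : (L3.map zr).mulVec (a • ![0, 0, 0, 0, 1, 1, -1, 1] + b • ![1, 1, 1, -1, 0, 0, 0, 0]) = 0 := by
        funext j
        fin_cases j <;>
          norm_num [Matrix.mulVec, dotProduct, Fin.sum_univ_eight, Matrix.map_apply, -Matrix.cons_val', -Matrix.vecCons_const, Matrix.vecHead, Matrix.vecTail,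
            L3, zr, smul_eq_mul]
      rw [hz, smul_zero]
    · show spinLift (Aex3 t 4) *ᵥ _ = 0
      rw [sl4, Matrix.smul_mulVec]
      have hz : (L4.map zr).mulVec (a • ![0, 0, 0, 0, 1, 1, -1, 1] + b • ![1, 1, 1, -1, 0, 0, 0, 0]) = 0 := by
        funext j
        fin_cases j <;>
          norm_num [Matrix.mulVec, dotProduct, Fin.sum_univ_eight, Matrix.map_apply, -Matrix.cons_val', -Matrix.vecCons_const, Matrix.vecHead, Matrix.vecTail,
            L4, zr, smul_eq_mul]
      rw [hz, smul_zero]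
    · show spinLift (Aex3 t 5) *ᵥ _ = 0
      rw [sl5, Matrix.smul_mulVec]
      have hz : (L5.map zr).mulVec (a • ![0, 0, 0, 0, 1, 1, -1, 1] + b • ![1, 1, 1, -1, 0, 0, 0, 0]) = 0 := by
        funext j
        fin_cases j <;>
          norm_num [Matrix.mulVec, dotProduct, Fin.sum_univ_eight, Matrix.map_apply, -Matrix.cons_val', -Matrix.vecCons_const, Matrix.vecHead, Matrix.vecTail,
            L5, zr, smul_eq_mul]
      rw [hz, smul_zero]
    · show spinLift (Aex3 t 6) *ᵥ _ = 0
      rw [sl6, Matrix.zero_mulVec]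
end
end

section
/- (Two invariant parallel spinors for example (5).) Fix t > 0 and let the connection matrices of example (5) be A₁ = 0, A₂ = −t(−E₂₇−E₄₅), A₃ = −t(−E₃₇−E₄₆), A₄ = −t(−E₂₅−E₃₆+2E₄₇), A₅ = −t(E₂₄+E₅₇), A₆ = −t(E₃₄+E₆₇), A₇ = 0. Then the space {ψ ∈ ℝ⁸ : σ(A_i)·ψ = 0 for all i = 1,…,7} is exactly the two-dimensional linear span of (0,0,0,0,1,1,−1,1) and (−1,1,1,1,0,0,0,0). -/
open Matrix

noncomputable section

/-- Connection matrices of example (5). -/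
def Aex5 (t : ℝ) : Fin 7 → Matrix (Fin 7) (Fin 7) ℝ :=
  ![0,
    (-t) • (-E7 1 6 - E7 3 4),
    (-t) • (-E7 2 6 - E7 3 5),
    (-t) • (-E7 1 4 - E7 2 5 + (2:ℝ) • E7 3 6),
    (-t) • (E7 1 3 + E7 4 6),
    (-t) • (E7 2 3 + E7 5 6), 0]


-- ## Auxiliary lemmas

lemma gd0 : g 0 = E8 0 7 + E8 1 6 - E8 2 5 - E8 3 4 := rfl
lemma gd1 : g 1 = -E8 0 6 + E8 1 7 + E8 2 4 - E8 3 5 := rfl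
lemma gd2 : g 2 = -E8 0 5 + E8 1 4 - E8 2 7 + E8 3 6 := rfl
lemma gd3 : g 3 = -E8 0 4 - E8 1 5 - E8 2 6 - E8 3 7 := rfl
lemma gd4 : g 4 = -E8 0 2 - E8 1 3 + E8 4 6 + E8 5 7 := rfl
lemma gd5 : g 5 = E8 0 3 - E8 1 2 - E8 4 7 + E8 5 6 := rfl
lemma gd6 : g 6 = E8 0 1 - E8 2 3 - E8 4 5 + E8 6 7 := rfl

lemma vec8_ext {v w : Fin 8 → ℝ} (h0 : v 0 = w 0) (h1 : v 1 = w 1) (h2 : v 2 = w 2)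
    (h3 : v 3 = w 3) (h4 : v 4 = w 4) (h5 : v 5 = w 5) (h6 : v 6 = w 6)
    (h7 : v 7 = w 7) : v = w := by
  funext j; fin_cases j
  exacts [h0, h1, h2, h3, h4, h5, h6, h7]

lemma Ad0 (t : ℝ) : Aex5 t 0 = (0 : Matrix (Fin 7) (Fin 7) ℝ) := rfl
lemma Ad1 (t : ℝ) : Aex5 t 1 = (-t) • (-E7 1 6 - E7 3 4) := rfl
lemma Ad2 (t : ℝ) : Aex5 t 2 = (-t) • (-E7 2 6 - E7 3 5) := rfl
lemma Ad3 (t : ℝ) : Aex5 t 3 = (-t) • (-E7 1 4 - E7 2 5 + (2:ℝ) • E7 3 6) := rfl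
lemma Ad4 (t : ℝ) : Aex5 t 4 = (-t) • (E7 1 3 + E7 4 6) := rfl
lemma Ad5 (t : ℝ) : Aex5 t 5 = (-t) • (E7 2 3 + E7 5 6) := rfl
lemma Ad6 (t : ℝ) : Aex5 t 6 = (0 : Matrix (Fin 7) (Fin 7) ℝ) := rfl

lemma v1c0 : (![0, 0, 0, 0, 1, 1, -1, 1] : Fin 8 → ℝ) 0 = 0 := rfl
lemma v1c1 : (![0, 0, 0, 0, 1, 1, -1, 1] : Fin 8 → ℝ) 1 = 0 := rfl
lemma v1c2 : (![0, 0, 0, 0, 1, 1, -1, 1] : Fin 8 → ℝ) 2 = 0 := rfl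
lemma v1c3 : (![0, 0, 0, 0, 1, 1, -1, 1] : Fin 8 → ℝ) 3 = 0 := rfl
lemma v1c4 : (![0, 0, 0, 0, 1, 1, -1, 1] : Fin 8 → ℝ) 4 = 1 := rfl
lemma v1c5 : (![0, 0, 0, 0, 1, 1, -1, 1] : Fin 8 → ℝ) 5 = 1 := rfl
lemma v1c6 : (![0, 0, 0, 0, 1, 1, -1, 1] : Fin 8 → ℝ) 6 = -1 := rfl
lemma v1c7 : (![0, 0, 0, 0, 1, 1, -1, 1] : Fin 8 → ℝ) 7 = 1 := rfl
lemma v2c0 : (![-1, 1, 1, 1, 0, 0, 0, 0] : Fin 8 → ℝ) 0 = -1 := rfl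
lemma v2c1 : (![-1, 1, 1, 1, 0, 0, 0, 0] : Fin 8 → ℝ) 1 = 1 := rfl
lemma v2c2 : (![-1, 1, 1, 1, 0, 0, 0, 0] : Fin 8 → ℝ) 2 = 1 := rfl
lemma v2c3 : (![-1, 1, 1, 1, 0, 0, 0, 0] : Fin 8 → ℝ) 3 = 1 := rfl
lemma v2c4 : (![-1, 1, 1, 1, 0, 0, 0, 0] : Fin 8 → ℝ) 4 = 0 := rfl
lemma v2c5 : (![-1, 1, 1, 1, 0, 0, 0, 0] : Fin 8 → ℝ) 5 = 0 := rfl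
lemma v2c6 : (![-1, 1, 1, 1, 0, 0, 0, 0] : Fin 8 → ℝ) 6 = 0 := rfl
lemma v2c7 : (![-1, 1, 1, 1, 0, 0, 0, 0] : Fin 8 → ℝ) 7 = 0 := rfl

lemma L10 (t : ℝ) (ψ : Fin 8 → ℝ) :
    (spinLift (Aex5 t 1)).mulVec ψ 0 = t/2 * (-ψ 6 - ψ 7) := by
  rw [Ad1]
  simp (config := { decide := true }) [spinLift, Fin.sum_univ_seven, E7,
    gd0, gd1, gd2, gd3, gd4, gd5, gd6, E8, Matrix.mul_apply, Matrix.mulVec,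
    dotProduct, Fin.sum_univ_eight, Matrix.single]
  ring

lemma L11 (t : ℝ) (ψ : Fin 8 → ℝ) :
    (spinLift (Aex5 t 1)).mulVec ψ 1 = t/2 * (-ψ 6 - ψ 7) := by
  rw [Ad1]
  simp (config := { decide := true }) [spinLift, Fin.sum_univ_seven, E7,
    gd0, gd1, gd2, gd3, gd4, gd5, gd6, E8, Matrix.mul_apply, Matrix.mulVec,
    dotProduct, Fin.sum_univ_eight, Matrix.single]
  ring

lemma L12 (t : ℝ) (ψ : Fin 8 → ℝ) :
    (spinLift (Aex5 t 1)).mulVec ψ 2 = t/2 * (ψ 4 - ψ 5) := by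
  rw [Ad1]
  simp (config := { decide := true }) [spinLift, Fin.sum_univ_seven, E7,
    gd0, gd1, gd2, gd3, gd4, gd5, gd6, E8, Matrix.mul_apply, Matrix.mulVec,
    dotProduct, Fin.sum_univ_eight, Matrix.single]
  ring

lemma L13 (t : ℝ) (ψ : Fin 8 → ℝ) :
    (spinLift (Aex5 t 1)).mulVec ψ 3 = t/2 * (-ψ 4 + ψ 5) := by
  rw [Ad1]
  simp (config := { decide := true }) [spinLift, Fin.sum_univ_seven, E7,
    gd0, gd1, gd2, gd3, gd4, gd5, gd6, E8, Matrix.mul_apply, Matrix.mulVec,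
    dotProduct, Fin.sum_univ_eight, Matrix.single]
  ring

lemma L14 (t : ℝ) (ψ : Fin 8 → ℝ) :
    (spinLift (Aex5 t 1)).mulVec ψ 4 = t/2 * (-ψ 2 + ψ 3) := by
  rw [Ad1]
  simp (config := { decide := true }) [spinLift, Fin.sum_univ_seven, E7,
    gd0, gd1, gd2, gd3, gd4, gd5, gd6, E8, Matrix.mul_apply, Matrix.mulVec,
    dotProduct, Fin.sum_univ_eight, Matrix.single]
  ring

lemma L15 (t : ℝ) (ψ : Fin 8 → ℝ) :
    (spinLift (Aex5 t 1)).mulVec ψ 5 = t/2 * (ψ 2 - ψ 3) := by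
  rw [Ad1]
  simp (config := { decide := true }) [spinLift, Fin.sum_univ_seven, E7,
    gd0, gd1, gd2, gd3, gd4, gd5, gd6, E8, Matrix.mul_apply, Matrix.mulVec,
    dotProduct, Fin.sum_univ_eight, Matrix.single]
  ring

lemma L16 (t : ℝ) (ψ : Fin 8 → ℝ) :
    (spinLift (Aex5 t 1)).mulVec ψ 6 = t/2 * (ψ 0 + ψ 1) := by
  rw [Ad1]
  simp (config := { decide := true }) [spinLift, Fin.sum_univ_seven, E7,
    gd0, gd1, gd2, gd3, gd4, gd5, gd6, E8, Matrix.mul_apply, Matrix.mulVec,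
    dotProduct, Fin.sum_univ_eight, Matrix.single]
  ring

lemma L17 (t : ℝ) (ψ : Fin 8 → ℝ) :
    (spinLift (Aex5 t 1)).mulVec ψ 7 = t/2 * (ψ 0 + ψ 1) := by
  rw [Ad1]
  simp (config := { decide := true }) [spinLift, Fin.sum_univ_seven, E7,
    gd0, gd1, gd2, gd3, gd4, gd5, gd6, E8, Matrix.mul_apply, Matrix.mulVec,
    dotProduct, Fin.sum_univ_eight, Matrix.single]
  ring

lemma L20 (t : ℝ) (ψ : Fin 8 → ℝ) :
    (spinLift (Aex5 t 2)).mulVec ψ 0 = t/2 * (-ψ 4 + ψ 7) := by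
  rw [Ad2]
  simp (config := { decide := true }) [spinLift, Fin.sum_univ_seven, E7,
    gd0, gd1, gd2, gd3, gd4, gd5, gd6, E8, Matrix.mul_apply, Matrix.mulVec,
    dotProduct, Fin.sum_univ_eight, Matrix.single]
  ring

lemma L21 (t : ℝ) (ψ : Fin 8 → ℝ) :
    (spinLift (Aex5 t 2)).mulVec ψ 1 = t/2 * (-ψ 5 - ψ 6) := by
  rw [Ad2]
  simp (config := { decide := true }) [spinLift, Fin.sum_univ_seven, E7,
    gd0, gd1, gd2, gd3, gd4, gd5, gd6, E8, Matrix.mul_apply, Matrix.mulVec,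
    dotProduct, Fin.sum_univ_eight, Matrix.single]
  ring

lemma L22 (t : ℝ) (ψ : Fin 8 → ℝ) :
    (spinLift (Aex5 t 2)).mulVec ψ 2 = t/2 * (ψ 5 + ψ 6) := by
  rw [Ad2]
  simp (config := { decide := true }) [spinLift, Fin.sum_univ_seven, E7,
    gd0, gd1, gd2, gd3, gd4, gd5, gd6, E8, Matrix.mul_apply, Matrix.mulVec,
    dotProduct, Fin.sum_univ_eight, Matrix.single]
  ring

lemma L23 (t : ℝ) (ψ : Fin 8 → ℝ) :
    (spinLift (Aex5 t 2)).mulVec ψ 3 = t/2 * (-ψ 4 + ψ 7) := by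
  rw [Ad2]
  simp (config := { decide := true }) [spinLift, Fin.sum_univ_seven, E7,
    gd0, gd1, gd2, gd3, gd4, gd5, gd6, E8, Matrix.mul_apply, Matrix.mulVec,
    dotProduct, Fin.sum_univ_eight, Matrix.single]
  ring

lemma L24 (t : ℝ) (ψ : Fin 8 → ℝ) :
    (spinLift (Aex5 t 2)).mulVec ψ 4 = t/2 * (ψ 0 + ψ 3) := by
  rw [Ad2]
  simp (config := { decide := true }) [spinLift, Fin.sum_univ_seven, E7,
    gd0, gd1, gd2, gd3, gd4, gd5, gd6, E8, Matrix.mul_apply, Matrix.mulVec,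
    dotProduct, Fin.sum_univ_eight, Matrix.single]
  ring

lemma L25 (t : ℝ) (ψ : Fin 8 → ℝ) :
    (spinLift (Aex5 t 2)).mulVec ψ 5 = t/2 * (ψ 1 - ψ 2) := by
  rw [Ad2]
  simp (config := { decide := true }) [spinLift, Fin.sum_univ_seven, E7,
    gd0, gd1, gd2, gd3, gd4, gd5, gd6, E8, Matrix.mul_apply, Matrix.mulVec,
    dotProduct, Fin.sum_univ_eight, Matrix.single]
  ring

lemma L26 (t : ℝ) (ψ : Fin 8 → ℝ) :
    (spinLift (Aex5 t 2)).mulVec ψ 6 = t/2 * (ψ 1 - ψ 2) := by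
  rw [Ad2]
  simp (config := { decide := true }) [spinLift, Fin.sum_univ_seven, E7,
    gd0, gd1, gd2, gd3, gd4, gd5, gd6, E8, Matrix.mul_apply, Matrix.mulVec,
    dotProduct, Fin.sum_univ_eight, Matrix.single]
  ring

lemma L27 (t : ℝ) (ψ : Fin 8 → ℝ) :
    (spinLift (Aex5 t 2)).mulVec ψ 7 = t/2 * (-ψ 0 - ψ 3) := by
  rw [Ad2]
  simp (config := { decide := true }) [spinLift, Fin.sum_univ_seven, E7,
    gd0, gd1, gd2, gd3, gd4, gd5, gd6, E8, Matrix.mul_apply, Matrix.mulVec,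
    dotProduct, Fin.sum_univ_eight, Matrix.single]
  ring

lemma L30 (t : ℝ) (ψ : Fin 8 → ℝ) :
    (spinLift (Aex5 t 3)).mulVec ψ 0 = t/2 * (ψ 4 - (2:ℝ) * ψ 5 - ψ 6) := by
  rw [Ad3]
  simp (config := { decide := true }) [spinLift, Fin.sum_univ_seven, E7,
    gd0, gd1, gd2, gd3, gd4, gd5, gd6, E8, Matrix.mul_apply, Matrix.mulVec,
    dotProduct, Fin.sum_univ_eight, Matrix.single]
  ring

lemma L31 (t : ℝ) (ψ : Fin 8 → ℝ) :
    (spinLift (Aex5 t 3)).mulVec ψ 1 = t/2 * ((2:ℝ) * ψ 4 - ψ 5 - ψ 7) := by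
  rw [Ad3]
  simp (config := { decide := true }) [spinLift, Fin.sum_univ_seven, E7,
    gd0, gd1, gd2, gd3, gd4, gd5, gd6, E8, Matrix.mul_apply, Matrix.mulVec,
    dotProduct, Fin.sum_univ_eight, Matrix.single]
  ring

lemma L32 (t : ℝ) (ψ : Fin 8 → ℝ) :
    (spinLift (Aex5 t 3)).mulVec ψ 2 = t/2 * (-ψ 4 + ψ 6 + (2:ℝ) * ψ 7) := by
  rw [Ad3]
  simp (config := { decide := true }) [spinLift, Fin.sum_univ_seven, E7,
    gd0, gd1, gd2, gd3, gd4, gd5, gd6, E8, Matrix.mul_apply, Matrix.mulVec,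
    dotProduct, Fin.sum_univ_eight, Matrix.single]
  ring

lemma L33 (t : ℝ) (ψ : Fin 8 → ℝ) :
    (spinLift (Aex5 t 3)).mulVec ψ 3 = t/2 * (-ψ 5 - (2:ℝ) * ψ 6 - ψ 7) := by
  rw [Ad3]
  simp (config := { decide := true }) [spinLift, Fin.sum_univ_seven, E7,
    gd0, gd1, gd2, gd3, gd4, gd5, gd6, E8, Matrix.mul_apply, Matrix.mulVec,
    dotProduct, Fin.sum_univ_eight, Matrix.single]
  ring

lemma L34 (t : ℝ) (ψ : Fin 8 → ℝ) :
    (spinLift (Aex5 t 3)).mulVec ψ 4 = t/2 * (-ψ 0 - (2:ℝ) * ψ 1 + ψ 2) := by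
  rw [Ad3]
  simp (config := { decide := true }) [spinLift, Fin.sum_univ_seven, E7,
    gd0, gd1, gd2, gd3, gd4, gd5, gd6, E8, Matrix.mul_apply, Matrix.mulVec,
    dotProduct, Fin.sum_univ_eight, Matrix.single]
  ring

lemma L35 (t : ℝ) (ψ : Fin 8 → ℝ) :
    (spinLift (Aex5 t 3)).mulVec ψ 5 = t/2 * ((2:ℝ) * ψ 0 + ψ 1 + ψ 3) := by
  rw [Ad3]
  simp (config := { decide := true }) [spinLift, Fin.sum_univ_seven, E7,
    gd0, gd1, gd2, gd3, gd4, gd5, gd6, E8, Matrix.mul_apply, Matrix.mulVec,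
    dotProduct, Fin.sum_univ_eight, Matrix.single]
  ring

lemma L36 (t : ℝ) (ψ : Fin 8 → ℝ) :
    (spinLift (Aex5 t 3)).mulVec ψ 6 = t/2 * (ψ 0 - ψ 2 + (2:ℝ) * ψ 3) := by
  rw [Ad3]
  simp (config := { decide := true }) [spinLift, Fin.sum_univ_seven, E7,
    gd0, gd1, gd2, gd3, gd4, gd5, gd6, E8, Matrix.mul_apply, Matrix.mulVec,
    dotProduct, Fin.sum_univ_eight, Matrix.single]
  ring

lemma L37 (t : ℝ) (ψ : Fin 8 → ℝ) :
    (spinLift (Aex5 t 3)).mulVec ψ 7 = t/2 * (ψ 1 - (2:ℝ) * ψ 2 + ψ 3) := by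
  rw [Ad3]
  simp (config := { decide := true }) [spinLift, Fin.sum_univ_seven, E7,
    gd0, gd1, gd2, gd3, gd4, gd5, gd6, E8, Matrix.mul_apply, Matrix.mulVec,
    dotProduct, Fin.sum_univ_eight, Matrix.single]
  ring

lemma L40 (t : ℝ) (ψ : Fin 8 → ℝ) :
    (spinLift (Aex5 t 4)).mulVec ψ 0 = t/2 * (ψ 2 - ψ 3) := by
  rw [Ad4]
  simp (config := { decide := true }) [spinLift, Fin.sum_univ_seven, E7,
    gd0, gd1, gd2, gd3, gd4, gd5, gd6, E8, Matrix.mul_apply, Matrix.mulVec,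
    dotProduct, Fin.sum_univ_eight, Matrix.single]
  ring

lemma L41 (t : ℝ) (ψ : Fin 8 → ℝ) :
    (spinLift (Aex5 t 4)).mulVec ψ 1 = t/2 * (ψ 2 - ψ 3) := by
  rw [Ad4]
  simp (config := { decide := true }) [spinLift, Fin.sum_univ_seven, E7,
    gd0, gd1, gd2, gd3, gd4, gd5, gd6, E8, Matrix.mul_apply, Matrix.mulVec,
    dotProduct, Fin.sum_univ_eight, Matrix.single]
  ring

lemma L42 (t : ℝ) (ψ : Fin 8 → ℝ) :
    (spinLift (Aex5 t 4)).mulVec ψ 2 = t/2 * (-ψ 0 - ψ 1) := by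
  rw [Ad4]
  simp (config := { decide := true }) [spinLift, Fin.sum_univ_seven, E7,
    gd0, gd1, gd2, gd3, gd4, gd5, gd6, E8, Matrix.mul_apply, Matrix.mulVec,
    dotProduct, Fin.sum_univ_eight, Matrix.single]
  ring

lemma L43 (t : ℝ) (ψ : Fin 8 → ℝ) :
    (spinLift (Aex5 t 4)).mulVec ψ 3 = t/2 * (ψ 0 + ψ 1) := by
  rw [Ad4]
  simp (config := { decide := true }) [spinLift, Fin.sum_univ_seven, E7,
    gd0, gd1, gd2, gd3, gd4, gd5, gd6, E8, Matrix.mul_apply, Matrix.mulVec,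
    dotProduct, Fin.sum_univ_eight, Matrix.single]
  ring

lemma L44 (t : ℝ) (ψ : Fin 8 → ℝ) :
    (spinLift (Aex5 t 4)).mulVec ψ 4 = t/2 * (-ψ 6 - ψ 7) := by
  rw [Ad4]
  simp (config := { decide := true }) [spinLift, Fin.sum_univ_seven, E7,
    gd0, gd1, gd2, gd3, gd4, gd5, gd6, E8, Matrix.mul_apply, Matrix.mulVec,
    dotProduct, Fin.sum_univ_eight, Matrix.single]
  ring

lemma L45 (t : ℝ) (ψ : Fin 8 → ℝ) :
    (spinLift (Aex5 t 4)).mulVec ψ 5 = t/2 * (ψ 6 + ψ 7) := by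
  rw [Ad4]
  simp (config := { decide := true }) [spinLift, Fin.sum_univ_seven, E7,
    gd0, gd1, gd2, gd3, gd4, gd5, gd6, E8, Matrix.mul_apply, Matrix.mulVec,
    dotProduct, Fin.sum_univ_eight, Matrix.single]
  ring

lemma L46 (t : ℝ) (ψ : Fin 8 → ℝ) :
    (spinLift (Aex5 t 4)).mulVec ψ 6 = t/2 * (ψ 4 - ψ 5) := by
  rw [Ad4]
  simp (config := { decide := true }) [spinLift, Fin.sum_univ_seven, E7,
    gd0, gd1, gd2, gd3, gd4, gd5, gd6, E8, Matrix.mul_apply, Matrix.mulVec,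
    dotProduct, Fin.sum_univ_eight, Matrix.single]
  ring

lemma L47 (t : ℝ) (ψ : Fin 8 → ℝ) :
    (spinLift (Aex5 t 4)).mulVec ψ 7 = t/2 * (ψ 4 - ψ 5) := by
  rw [Ad4]
  simp (config := { decide := true }) [spinLift, Fin.sum_univ_seven, E7,
    gd0, gd1, gd2, gd3, gd4, gd5, gd6, E8, Matrix.mul_apply, Matrix.mulVec,
    dotProduct, Fin.sum_univ_eight, Matrix.single]
  ring

lemma L50 (t : ℝ) (ψ : Fin 8 → ℝ) :
    (spinLift (Aex5 t 5)).mulVec ψ 0 = t/2 * (ψ 1 - ψ 2) := by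
  rw [Ad5]
  simp (config := { decide := true }) [spinLift, Fin.sum_univ_seven, E7,
    gd0, gd1, gd2, gd3, gd4, gd5, gd6, E8, Matrix.mul_apply, Matrix.mulVec,
    dotProduct, Fin.sum_univ_eight, Matrix.single]
  ring

lemma L51 (t : ℝ) (ψ : Fin 8 → ℝ) :
    (spinLift (Aex5 t 5)).mulVec ψ 1 = t/2 * (-ψ 0 - ψ 3) := by
  rw [Ad5]
  simp (config := { decide := true }) [spinLift, Fin.sum_univ_seven, E7,
    gd0, gd1, gd2, gd3, gd4, gd5, gd6, E8, Matrix.mul_apply, Matrix.mulVec,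
    dotProduct, Fin.sum_univ_eight, Matrix.single]
  ring

lemma L52 (t : ℝ) (ψ : Fin 8 → ℝ) :
    (spinLift (Aex5 t 5)).mulVec ψ 2 = t/2 * (ψ 0 + ψ 3) := by
  rw [Ad5]
  simp (config := { decide := true }) [spinLift, Fin.sum_univ_seven, E7,
    gd0, gd1, gd2, gd3, gd4, gd5, gd6, E8, Matrix.mul_apply, Matrix.mulVec,
    dotProduct, Fin.sum_univ_eight, Matrix.single]
  ring

lemma L53 (t : ℝ) (ψ : Fin 8 → ℝ) :
    (spinLift (Aex5 t 5)).mulVec ψ 3 = t/2 * (ψ 1 - ψ 2) := by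
  rw [Ad5]
  simp (config := { decide := true }) [spinLift, Fin.sum_univ_seven, E7,
    gd0, gd1, gd2, gd3, gd4, gd5, gd6, E8, Matrix.mul_apply, Matrix.mulVec,
    dotProduct, Fin.sum_univ_eight, Matrix.single]
  ring

lemma L54 (t : ℝ) (ψ : Fin 8 → ℝ) :
    (spinLift (Aex5 t 5)).mulVec ψ 4 = t/2 * (-ψ 5 - ψ 6) := by
  rw [Ad5]
  simp (config := { decide := true }) [spinLift, Fin.sum_univ_seven, E7,
    gd0, gd1, gd2, gd3, gd4, gd5, gd6, E8, Matrix.mul_apply, Matrix.mulVec,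
    dotProduct, Fin.sum_univ_eight, Matrix.single]
  ring

lemma L55 (t : ℝ) (ψ : Fin 8 → ℝ) :
    (spinLift (Aex5 t 5)).mulVec ψ 5 = t/2 * (ψ 4 - ψ 7) := by
  rw [Ad5]
  simp (config := { decide := true }) [spinLift, Fin.sum_univ_seven, E7,
    gd0, gd1, gd2, gd3, gd4, gd5, gd6, E8, Matrix.mul_apply, Matrix.mulVec,
    dotProduct, Fin.sum_univ_eight, Matrix.single]
  ring

lemma L56 (t : ℝ) (ψ : Fin 8 → ℝ) :
    (spinLift (Aex5 t 5)).mulVec ψ 6 = t/2 * (ψ 4 - ψ 7) := by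
  rw [Ad5]
  simp (config := { decide := true }) [spinLift, Fin.sum_univ_seven, E7,
    gd0, gd1, gd2, gd3, gd4, gd5, gd6, E8, Matrix.mul_apply, Matrix.mulVec,
    dotProduct, Fin.sum_univ_eight, Matrix.single]
  ring

lemma L57 (t : ℝ) (ψ : Fin 8 → ℝ) :
    (spinLift (Aex5 t 5)).mulVec ψ 7 = t/2 * (ψ 5 + ψ 6) := by
  rw [Ad5]
  simp (config := { decide := true }) [spinLift, Fin.sum_univ_seven, E7,
    gd0, gd1, gd2, gd3, gd4, gd5, gd6, E8, Matrix.mul_apply, Matrix.mulVec,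
    dotProduct, Fin.sum_univ_eight, Matrix.single]
  ring

lemma spinLift_zero : spinLift 0 = 0 := by
  simp [spinLift]

lemma cancel {t x : ℝ} (ht : 0 < t) (h : t/2 * x = 0) : x = 0 := by
  rcases mul_eq_zero.mp h with h' | h'
  · exfalso; linarith
  · exact h'

lemma spin_v1 (t : ℝ) (i : Fin 7) :
    (spinLift (Aex5 t i)).mulVec (![0, 0, 0, 0, 1, 1, -1, 1] : Fin 8 → ℝ) = 0 := by
  fin_cases i
  · show (spinLift (Aex5 t 0)).mulVec _ = 0
    rw [Ad0, spinLift_zero]; simp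
  · show (spinLift (Aex5 t 1)).mulVec _ = 0
    refine vec8_ext ?_ ?_ ?_ ?_ ?_ ?_ ?_ ?_ <;>
      simp only [L10, L11, L12, L13, L14, L15, L16, L17, v1c0, v1c1, v1c2, v1c3, v1c4, v1c5, v1c6, v1c7,
        v2c0, v2c1, v2c2, v2c3, v2c4, v2c5, v2c6, v2c7, Pi.zero_apply] <;>
      norm_num
  · show (spinLift (Aex5 t 2)).mulVec _ = 0
    refine vec8_ext ?_ ?_ ?_ ?_ ?_ ?_ ?_ ?_ <;>
      simp only [L20, L21, L22, L23, L24, L25, L26, L27, v1c0, v1c1, v1c2, v1c3, v1c4, v1c5, v1c6, v1c7,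
        v2c0, v2c1, v2c2, v2c3, v2c4, v2c5, v2c6, v2c7, Pi.zero_apply] <;>
      norm_num
  · show (spinLift (Aex5 t 3)).mulVec _ = 0
    refine vec8_ext ?_ ?_ ?_ ?_ ?_ ?_ ?_ ?_ <;>
      simp only [L30, L31, L32, L33, L34, L35, L36, L37, v1c0, v1c1, v1c2, v1c3, v1c4, v1c5, v1c6, v1c7,
        v2c0, v2c1, v2c2, v2c3, v2c4, v2c5, v2c6, v2c7, Pi.zero_apply] <;>
      norm_num
  · show (spinLift (Aex5 t 4)).mulVec _ = 0
    refine vec8_ext ?_ ?_ ?_ ?_ ?_ ?_ ?_ ?_ <;>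
      simp only [L40, L41, L42, L43, L44, L45, L46, L47, v1c0, v1c1, v1c2, v1c3, v1c4, v1c5, v1c6, v1c7,
        v2c0, v2c1, v2c2, v2c3, v2c4, v2c5, v2c6, v2c7, Pi.zero_apply] <;>
      norm_num
  · show (spinLift (Aex5 t 5)).mulVec _ = 0
    refine vec8_ext ?_ ?_ ?_ ?_ ?_ ?_ ?_ ?_ <;>
      simp only [L50, L51, L52, L53, L54, L55, L56, L57, v1c0, v1c1, v1c2, v1c3, v1c4, v1c5, v1c6, v1c7,
        v2c0, v2c1, v2c2, v2c3, v2c4, v2c5, v2c6, v2c7, Pi.zero_apply] <;>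
      norm_num
  · show (spinLift (Aex5 t 6)).mulVec _ = 0
    rw [Ad6, spinLift_zero]; simp

lemma spin_v2 (t : ℝ) (i : Fin 7) :
    (spinLift (Aex5 t i)).mulVec (![-1, 1, 1, 1, 0, 0, 0, 0] : Fin 8 → ℝ) = 0 := by
  fin_cases i
  · show (spinLift (Aex5 t 0)).mulVec _ = 0
    rw [Ad0, spinLift_zero]; simp
  · show (spinLift (Aex5 t 1)).mulVec _ = 0
    refine vec8_ext ?_ ?_ ?_ ?_ ?_ ?_ ?_ ?_ <;>
      simp only [L10, L11, L12, L13, L14, L15, L16, L17, v1c0, v1c1, v1c2, v1c3, v1c4, v1c5, v1c6, v1c7,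
        v2c0, v2c1, v2c2, v2c3, v2c4, v2c5, v2c6, v2c7, Pi.zero_apply] <;>
      norm_num
  · show (spinLift (Aex5 t 2)).mulVec _ = 0
    refine vec8_ext ?_ ?_ ?_ ?_ ?_ ?_ ?_ ?_ <;>
      simp only [L20, L21, L22, L23, L24, L25, L26, L27, v1c0, v1c1, v1c2, v1c3, v1c4, v1c5, v1c6, v1c7,
        v2c0, v2c1, v2c2, v2c3, v2c4, v2c5, v2c6, v2c7, Pi.zero_apply] <;>
      norm_num
  · show (spinLift (Aex5 t 3)).mulVec _ = 0
    refine vec8_ext ?_ ?_ ?_ ?_ ?_ ?_ ?_ ?_ <;>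
      simp only [L30, L31, L32, L33, L34, L35, L36, L37, v1c0, v1c1, v1c2, v1c3, v1c4, v1c5, v1c6, v1c7,
        v2c0, v2c1, v2c2, v2c3, v2c4, v2c5, v2c6, v2c7, Pi.zero_apply] <;>
      norm_num
  · show (spinLift (Aex5 t 4)).mulVec _ = 0
    refine vec8_ext ?_ ?_ ?_ ?_ ?_ ?_ ?_ ?_ <;>
      simp only [L40, L41, L42, L43, L44, L45, L46, L47, v1c0, v1c1, v1c2, v1c3, v1c4, v1c5, v1c6, v1c7,
        v2c0, v2c1, v2c2, v2c3, v2c4, v2c5, v2c6, v2c7, Pi.zero_apply] <;>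
      norm_num
  · show (spinLift (Aex5 t 5)).mulVec _ = 0
    refine vec8_ext ?_ ?_ ?_ ?_ ?_ ?_ ?_ ?_ <;>
      simp only [L50, L51, L52, L53, L54, L55, L56, L57, v1c0, v1c1, v1c2, v1c3, v1c4, v1c5, v1c6, v1c7,
        v2c0, v2c1, v2c2, v2c3, v2c4, v2c5, v2c6, v2c7, Pi.zero_apply] <;>
      norm_num
  · show (spinLift (Aex5 t 6)).mulVec _ = 0
    rw [Ad6, spinLift_zero]; simp

/-- two invariant parallel spinors for example (5). -/
theorem stmt19 (t : ℝ) (ht : 0 < t) :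
    ∀ ψ : Fin 8 → ℝ, (∀ i : Fin 7, (spinLift (Aex5 t i)).mulVec ψ = 0) ↔
      ψ ∈ Submodule.span ℝ
        {(![0, 0, 0, 0, 1, 1, -1, 1] : Fin 8 → ℝ),
         ![-1, 1, 1, 1, 0, 0, 0, 0]} := by
  intro ψ
  constructor
  · intro h
    have e51 : ψ 0 + ψ 3 = 0 := by
      have h' := congrFun (h 5) 1; rw [L51 t ψ] at h'
      have := cancel ht (by simpa using h'); linarith
    have e50 : ψ 1 - ψ 2 = 0 := by
      have h' := congrFun (h 5) 0; rw [L50 t ψ] at h'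
      have := cancel ht (by simpa using h'); linarith
    have e40 : ψ 2 - ψ 3 = 0 := by
      have h' := congrFun (h 4) 0; rw [L40 t ψ] at h'
      have := cancel ht (by simpa using h'); linarith
    have e12 : ψ 4 - ψ 5 = 0 := by
      have h' := congrFun (h 1) 2; rw [L12 t ψ] at h'
      have := cancel ht (by simpa using h'); linarith
    have e44 : ψ 6 + ψ 7 = 0 := by
      have h' := congrFun (h 4) 4; rw [L44 t ψ] at h'
      have := cancel ht (by simpa using h'); linarith
    have e55 : ψ 4 - ψ 7 = 0 := by
      have h' := congrFun (h 5) 5; rw [L55 t ψ] at h'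
      have := cancel ht (by simpa using h'); linarith
    rw [Submodule.mem_span_pair]
    refine ⟨ψ 7, ψ 3, vec8_ext ?_ ?_ ?_ ?_ ?_ ?_ ?_ ?_⟩ <;>
      simp only [Pi.add_apply, Pi.smul_apply, v1c0, v1c1, v1c2, v1c3, v1c4, v1c5, v1c6,
        v1c7, v2c0, v2c1, v2c2, v2c3, v2c4, v2c5, v2c6, v2c7, smul_eq_mul] <;>
      linarith
  · intro hmem i
    have hker : Submodule.span ℝ
        {(![0, 0, 0, 0, 1, 1, -1, 1] : Fin 8 → ℝ), ![-1, 1, 1, 1, 0, 0, 0, 0]} ≤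
        LinearMap.ker (Matrix.mulVecLin (spinLift (Aex5 t i))) := by
      rw [Submodule.span_le]
      intro x hx
      simp only [Set.mem_insert_iff, Set.mem_singleton_iff] at hx
      rcases hx with rfl | rfl <;>
        rw [SetLike.mem_coe, LinearMap.mem_ker, Matrix.mulVecLin_apply]
      · exact spin_v1 t i
      · exact spin_v2 t i
    have hm := hker hmem
    rwa [LinearMap.mem_ker, Matrix.mulVecLin_apply] at hm
end
end
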